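/- arXiv:2405.20753 — 5 statements merged into one kernel-verified Lean document; each statement's English description precedes it below -/
import Mathlib

section
/- There exists a strong bimonoid B = (B,⊕,⊗,0,1) which is almost idempotent, right-distributive, and weakly locally finite, but not locally finite. -/
/-- A strong bimonoid: `(B,+,0)` a commutative monoid, `(B,*,1)` a monoid,
and `0` annihilating for `*`. -/
class StrongBimonoid (B : Type*) extends AddCommMonoid B, MonoidWithZero B

section Defs

variable {B : Type*} [StrongBimonoid B]

/-- The closure `⟨A⟩_{⊕,⊗,0,1}` of a subset `A`: the smallest subset of `B`
containing `A ∪ {0,1}` and closed under `+` and `*`. -/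
inductive SBClosure (A : Set B) : B → Prop
  | base {a : B} : a ∈ A → SBClosure A a
  | zero : SBClosure A 0
  | one : SBClosure A 1
  | add {a b : B} : SBClosure A a → SBClosure A b → SBClosure A (a + b)
  | mul {a b : B} : SBClosure A a → SBClosure A b → SBClosure A (a * b)

/-- `B` is locally finite if the closure of each finite subset is finite. -/
def SBLocallyFinite (B : Type*) [StrongBimonoid B] : Prop :=
  ∀ A : Set B, A.Finite → {b : B | SBClosure A b}.Finite

/-- The weak closure `wcl(A)`: the smallest subset containing `A ∪ {0,1}` closed
under addition and under multiplication on the right by elements of `A`. -/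
inductive WeakClosure (A : Set B) : B → Prop
  | base {a : B} : a ∈ A → WeakClosure A a
  | zero : WeakClosure A 0
  | one : WeakClosure A 1
  | add {b b' : B} : WeakClosure A b → WeakClosure A b' → WeakClosure A (b + b')
  | mulr {b a : B} : WeakClosure A b → a ∈ A → WeakClosure A (b * a)

/-- `B` is weakly locally finite if the weak closure of each finite subset is finite. -/
def WeaklyLocallyFinite (B : Type*) [StrongBimonoid B] : Prop :=
  ∀ A : Set B, A.Finite → {b : B | WeakClosure A b}.Finite

/-- `B` is additively locally finite if each finitely generated submonoid of `(B,+,0)` is finite. -/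
def AddLocallyFinite (B : Type*) [StrongBimonoid B] : Prop :=
  ∀ A : Set B, A.Finite → ((AddSubmonoid.closure A : AddSubmonoid B) : Set B).Finite

/-- `B` is multiplicatively locally finite if each finitely generated submonoid of `(B,*,1)` is finite. -/
def MulLocallyFinite (B : Type*) [StrongBimonoid B] : Prop :=
  ∀ A : Set B, A.Finite → ((Submonoid.closure A : Submonoid B) : Set B).Finite

/-- `B` is bi-locally finite if it is additively and multiplicatively locally finite. -/
def BiLocallyFinite (B : Type*) [StrongBimonoid B] : Prop :=
  AddLocallyFinite B ∧ MulLocallyFinite B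

/-- `B` is almost idempotent if `b + b + b = b + b` for all `b`. -/
def AlmostIdempotent (B : Type*) [StrongBimonoid B] : Prop :=
  ∀ b : B, b + b + b = b + b

/-- right-distributivity -/
def SBRightDistributive (B : Type*) [StrongBimonoid B] : Prop :=
  ∀ a b c : B, (a + b) * c = a * c + b * c

/-- left-distributivity -/
def SBLeftDistributive (B : Type*) [StrongBimonoid B] : Prop :=
  ∀ a b c : B, a * (b + c) = a * b + a * c

end Defs

namespace SBExample

/-! ### The multiplication on `Finset ℕ` -/

def tau (Y : Finset ℕ) : Finset ℕ :=
  if 2 * Y.card - 1 ∈ Y then Y else insert (2 * Y.card + 1) Y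

lemma subset_tau (Y : Finset ℕ) : Y ⊆ tau Y := by
  unfold tau; split
  · exact Finset.Subset.refl _
  · exact Finset.subset_insert _ _

lemma tau_tau (Y : Finset ℕ) : tau (tau Y) = tau Y := by
  by_cases h1 : 2 * Y.card - 1 ∈ Y
  · simp [tau, h1]
  · by_cases h2 : (2 * Y.card + 1) ∈ Y
    · have he : insert (2 * Y.card + 1) Y = Y := Finset.insert_eq_self.2 h2
      simp [tau, h1, he]
    · have hY : tau Y = insert (2 * Y.card + 1) Y := by simp [tau, h1]
      have hcard : (tau Y).card = Y.card + 1 := by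
        rw [hY, Finset.card_insert_of_notMem h2]
      have hmem : 2 * (tau Y).card - 1 ∈ tau Y := by
        rw [hcard, hY]
        have : 2 * (Y.card + 1) - 1 = 2 * Y.card + 1 := by omega
        rw [this]; exact Finset.mem_insert_self _ _
      rw [tau, if_pos hmem]

lemma tau_ne_empty {Y : Finset ℕ} (h : Y ≠ ∅) : tau Y ≠ ∅ := by
  intro he
  exact h (Finset.subset_empty.1 (he ▸ subset_tau Y))

lemma tau_ne_one {Y : Finset ℕ} (h : Y ≠ ∅) (h0 : Y ≠ {0}) : tau Y ≠ {0} := by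
  intro he
  have := he ▸ subset_tau Y
  rcases Finset.subset_singleton_iff.1 this with h' | h' <;> [exact h h'; exact h0 h']

def fmul (x : ℕ) (Y : Finset ℕ) : Finset ℕ :=
  if Y = ∅ then ∅ else if Y = {0} then {x} else if x = 0 then Y else tau Y

def bmul (X Y : Finset ℕ) : Finset ℕ := X.biUnion (fun x => fmul x Y)

lemma bmul_empty_left (Y : Finset ℕ) : bmul ∅ Y = ∅ := by simp [bmul]

lemma bmul_empty_right (X : Finset ℕ) : bmul X ∅ = ∅ := by
  ext x; simp [bmul, fmul]

lemma bmul_one_left (Y : Finset ℕ) : bmul {0} Y = Y := by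
  rw [bmul, Finset.singleton_biUnion, fmul]
  by_cases h : Y = ∅
  · simp [h]
  · by_cases h0 : Y = {0} <;> simp [h, h0]

lemma bmul_one_right (X : Finset ℕ) : bmul X {0} = X := by
  have : ∀ x, fmul x ({0} : Finset ℕ) = {x} := by
    intro x; simp [fmul]
  simp only [bmul, this]
  exact Finset.biUnion_singleton_eq_self

lemma fmul_subset_tau {x : ℕ} {Y : Finset ℕ} (h : Y ≠ ∅) (h0 : Y ≠ {0}) :
    fmul x Y ⊆ tau Y := by
  rw [fmul, if_neg h, if_neg h0]
  split
  · exact subset_tau Y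
  · exact Finset.Subset.refl _

lemma bmul_sp {X Y : Finset ℕ} (hX : X ≠ ∅) (hX0 : X ≠ {0}) (hY : Y ≠ ∅) (hY0 : Y ≠ {0}) :
    bmul X Y = tau Y := by
  obtain ⟨x0, hx0, hx0ne⟩ : ∃ x ∈ X, x ≠ 0 := by
    by_contra hcon
    push_neg at hcon
    rcases Finset.eq_empty_or_nonempty X with h | ⟨y, hy⟩
    · exact hX h
    · apply hX0
      apply Finset.eq_singleton_iff_unique_mem.2
      exact ⟨(hcon y hy) ▸ hy, fun z hz => hcon z hz⟩
  apply Finset.Subset.antisymm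
  · exact Finset.biUnion_subset.2 (fun x _ => fmul_subset_tau hY hY0)
  · intro z hz
    apply Finset.mem_biUnion.2 ⟨x0, hx0, ?_⟩
    rw [fmul, if_neg hY, if_neg hY0, if_neg hx0ne]
    exact hz

lemma bmul_subset {X Y : Finset ℕ} (hY : Y ≠ ∅) (hY0 : Y ≠ {0}) :
    bmul X Y ⊆ Y ∪ tau Y := by
  apply Finset.biUnion_subset.2
  intro x _
  exact (fmul_subset_tau hY hY0).trans (Finset.subset_union_right)

lemma bmul_assoc (X Y Z : Finset ℕ) : bmul (bmul X Y) Z = bmul X (bmul Y Z) := by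
  by_cases hX : X = ∅
  · simp [hX, bmul_empty_left]
  by_cases hX0 : X = {0}
  · simp [hX0, bmul_one_left]
  by_cases hY : Y = ∅
  · simp [hY, bmul_empty_left, bmul_empty_right]
  by_cases hY0 : Y = {0}
  · simp [hY0, bmul_one_left, bmul_one_right]
  by_cases hZ : Z = ∅
  · simp [hZ, bmul_empty_right]
  by_cases hZ0 : Z = {0}
  · simp [hZ0, bmul_one_right]
  rw [bmul_sp hX hX0 hY hY0, bmul_sp hY hY0 hZ hZ0,
      bmul_sp (tau_ne_empty hY) (tau_ne_one hY hY0) hZ hZ0,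
      bmul_sp hX hX0 (tau_ne_empty hZ) (tau_ne_one hZ hZ0), tau_tau]

/-! ### The strong bimonoid instance -/

instance : Zero (Finset ℕ) := ⟨∅⟩
instance : One (Finset ℕ) := ⟨{0}⟩
instance : Add (Finset ℕ) := ⟨fun X Y => X ∪ Y⟩
instance : Mul (Finset ℕ) := ⟨bmul⟩

instance instB : StrongBimonoid (Finset ℕ) where
  add_assoc := Finset.union_assoc
  zero_add := Finset.empty_union
  add_zero := Finset.union_empty
  add_comm := Finset.union_comm
  nsmul := nsmulRec
  mul_assoc := bmul_assoc
  one_mul := bmul_one_left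
  mul_one := bmul_one_right
  zero_mul := bmul_empty_left
  mul_zero := bmul_empty_right

lemma add_def (X Y : Finset ℕ) : X + Y = X ∪ Y := rfl
lemma mul_def (X Y : Finset ℕ) : X * Y = bmul X Y := rfl
lemma zero_def : (0 : Finset ℕ) = ∅ := rfl
lemma one_def : (1 : Finset ℕ) = {0} := rfl

/-! ### The growing sequence -/

def S (n : ℕ) : Finset ℕ :=
  insert 0 (insert 2 (insert 4 ((Finset.Icc 2 n).image (fun k => 2 * k + 1))))

lemma mem_S {x n : ℕ} :
    x ∈ S n ↔ x = 0 ∨ x = 2 ∨ x = 4 ∨ ∃ k, 2 ≤ k ∧ k ≤ n ∧ x = 2 * k + 1 := by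
  simp only [S, Finset.mem_insert, Finset.mem_image, Finset.mem_Icc]
  constructor
  · rintro (h | h | h | ⟨k, ⟨hk1, hk2⟩, hk3⟩)
    · exact Or.inl h
    · exact Or.inr (Or.inl h)
    · exact Or.inr (Or.inr (Or.inl h))
    · exact Or.inr (Or.inr (Or.inr ⟨k, hk1, hk2, hk3.symm⟩))
  · rintro (h | h | h | ⟨k, hk1, hk2, hk3⟩)
    · exact Or.inl h
    · exact Or.inr (Or.inl h)
    · exact Or.inr (Or.inr (Or.inl h))
    · exact Or.inr (Or.inr (Or.inr ⟨k, ⟨hk1, hk2⟩, hk3.symm⟩))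

lemma card_S {n : ℕ} (hn : 1 ≤ n) : (S n).card = n + 2 := by
  have hinj : Function.Injective (fun k => 2 * k + 1) := by
    intro a b hab; simpa using (by omega : 2*a+1 = 2*b+1 → a = b) (hab)
  have h4 : (4 : ℕ) ∉ (Finset.Icc 2 n).image (fun k => 2 * k + 1) := by
    simp only [Finset.mem_image, Finset.mem_Icc]; rintro ⟨k, _, hk⟩; omega
  have h2 : (2 : ℕ) ∉ insert 4 ((Finset.Icc 2 n).image (fun k => 2 * k + 1)) := by
    simp only [Finset.mem_insert, Finset.mem_image, Finset.mem_Icc]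
    rintro (h | ⟨k, _, hk⟩) <;> omega
  have h0 : (0 : ℕ) ∉ insert 2 (insert 4 ((Finset.Icc 2 n).image (fun k => 2 * k + 1))) := by
    simp only [Finset.mem_insert, Finset.mem_image, Finset.mem_Icc]
    rintro (h | h | ⟨k, _, hk⟩) <;> omega
  rw [S, Finset.card_insert_of_notMem h0, Finset.card_insert_of_notMem h2,
      Finset.card_insert_of_notMem h4, Finset.card_image_of_injective _ hinj, Nat.card_Icc]
  omega

lemma zero_mem_S (n : ℕ) : 0 ∈ S n := mem_S.2 (Or.inl rfl)
lemma two_mem_S (n : ℕ) : 2 ∈ S n := mem_S.2 (Or.inr (Or.inl rfl))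

lemma S_ne_empty (n : ℕ) : S n ≠ ∅ := by
  intro h; have := zero_mem_S n; rw [h] at this; simp at this

lemma S_ne_one (n : ℕ) : S n ≠ {0} := by
  intro h; have := two_mem_S n; rw [h] at this; simp at this

lemma tau_S {n : ℕ} (hn : 1 ≤ n) : tau (S n) = insert (2 * n + 5) (S n) := by
  have hcrit : 2 * (S n).card - 1 ∉ S n := by
    rw [card_S hn, mem_S]
    rintro (h | h | h | ⟨k, hk1, hk2, hk3⟩) <;> omega
  rw [tau, if_neg hcrit, card_S hn]
  have : 2 * (n + 2) + 1 = 2 * n + 5 := by omega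
  rw [this]

lemma S_succ {n : ℕ} (hn : 1 ≤ n) : S (n + 2) = S (n + 1) ∪ tau (S n) := by
  rw [tau_S hn]
  ext x
  simp only [Finset.mem_union, Finset.mem_insert, mem_S]
  constructor
  · rintro (h | h | h | ⟨k, hk1, hk2, hk3⟩)
    · exact Or.inl (Or.inl h)
    · exact Or.inl (Or.inr (Or.inl h))
    · exact Or.inl (Or.inr (Or.inr (Or.inl h)))
    · by_cases hk : k ≤ n + 1
      · exact Or.inl (Or.inr (Or.inr (Or.inr ⟨k, hk1, hk, hk3⟩)))
      · have : k = n + 2 := by omega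
        exact Or.inr (Or.inl (by omega))
  · rintro ((h | h | h | ⟨k, hk1, hk2, hk3⟩) | (h | (h | h | h | ⟨k, hk1, hk2, hk3⟩)))
    · exact Or.inl h
    · exact Or.inr (Or.inl h)
    · exact Or.inr (Or.inr (Or.inl h))
    · exact Or.inr (Or.inr (Or.inr ⟨k, hk1, by omega, hk3⟩))
    · exact Or.inr (Or.inr (Or.inr ⟨n + 2, by omega, by omega, by omega⟩))
    · exact Or.inl h
    · exact Or.inr (Or.inl h)
    · exact Or.inr (Or.inr (Or.inl h))
    · exact Or.inr (Or.inr (Or.inr ⟨k, hk1, by omega, hk3⟩))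

/-! ### The generating set and closure membership -/

def A0 : Set (Finset ℕ) := {{2}, {4}}

lemma cl2 : SBClosure A0 {2} := SBClosure.base (Set.mem_insert _ _)
lemma cl4 : SBClosure A0 {4} := SBClosure.base (Set.mem_insert_of_mem _ rfl)

lemma cl_congr {x y : Finset ℕ} (h : SBClosure A0 x) (e : x = y) : SBClosure A0 y := e ▸ h

lemma clS1 : SBClosure A0 (S 1) := by
  apply cl_congr (SBClosure.add (SBClosure.add SBClosure.one cl2) cl4)
  decide

lemma clS2 : SBClosure A0 (S 2) := by
  apply cl_congr (SBClosure.add (SBClosure.add (SBClosure.add SBClosure.one cl2) cl4)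
    (SBClosure.mul cl2 (SBClosure.add SBClosure.one cl2)))
  decide

lemma two_ne_empty : ({2} : Finset ℕ) ≠ ∅ := by decide
lemma two_ne_one : ({2} : Finset ℕ) ≠ {0} := by decide

lemma clS : ∀ m, SBClosure A0 (S (m + 1)) ∧ SBClosure A0 (S (m + 2)) := by
  intro m
  induction m with
  | zero => exact ⟨clS1, clS2⟩
  | succ k ih =>
    refine ⟨ih.2, ?_⟩
    apply cl_congr (SBClosure.add ih.2 (SBClosure.mul cl2 ih.1))
    have h1 : ({2} : Finset ℕ) * S (k + 1) = tau (S (k + 1)) := by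
      rw [mul_def]
      exact bmul_sp two_ne_empty two_ne_one (S_ne_empty _) (S_ne_one _)
    rw [add_def, h1, ← S_succ (by omega : 1 ≤ k + 1)]

/-! ### The four properties -/

lemma almost_idem : AlmostIdempotent (Finset ℕ) := by
  intro b
  show b ∪ b ∪ b = b ∪ b
  rw [Finset.union_self, Finset.union_self]

lemma right_dist : SBRightDistributive (Finset ℕ) := by
  intro a b c
  show bmul (a ∪ b) c = bmul a c ∪ bmul b c
  ext z
  simp only [bmul, Finset.mem_biUnion, Finset.mem_union]
  constructor
  · rintro ⟨x, hx | hx, hz⟩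
    · exact Or.inl ⟨x, hx, hz⟩
    · exact Or.inr ⟨x, hx, hz⟩
  · rintro (⟨x, hx, hz⟩ | ⟨x, hx, hz⟩)
    · exact ⟨x, Or.inl hx, hz⟩
    · exact ⟨x, Or.inr hx, hz⟩

lemma wlf : WeaklyLocallyFinite (Finset ℕ) := by
  intro A hA
  classical
  set U : Set ℕ := insert 0 (⋃ a ∈ A, ((a : Set ℕ) ∪ ((tau a : Finset ℕ) : Set ℕ))) with hU
  have hUfin : U.Finite := by
    apply Set.Finite.insert
    exact Set.Finite.biUnion hA (fun a _ => (a.finite_toSet.union (tau a).finite_toSet))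
  have key : ∀ b : Finset ℕ, WeakClosure A b → (b : Set ℕ) ⊆ U := by
    intro b hb
    induction hb with
    | base h =>
      rename_i a
      intro x hx
      apply Set.mem_insert_iff.2
      exact Or.inr (Set.mem_biUnion h (Set.mem_union_left _ hx))
    | zero =>
      rw [zero_def]
      simp
    | one =>
      rw [one_def]
      intro x hx
      simp only [Finset.coe_singleton, Set.mem_singleton_iff] at hx
      exact hx ▸ Set.mem_insert _ _
    | add hb hb' ih ih' =>
      rw [add_def, Finset.coe_union]
      exact Set.union_subset ih ih'
    | mulr hb ha ih =>
      rename_i b' a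
      rw [mul_def]
      by_cases h1 : a = ∅
      · rw [h1, bmul_empty_right]; simp
      by_cases h2 : a = {0}
      · rw [h2, bmul_one_right]; exact ih
      · intro x hx
        have hx' := bmul_subset h1 h2 hx
        apply Set.mem_insert_iff.2
        apply Or.inr
        apply Set.mem_biUnion ha
        rcases Finset.mem_union.1 hx' with h | h
        · exact Set.mem_union_left _ h
        · exact Set.mem_union_right _ h
  have hsub : {b : Finset ℕ | WeakClosure A b} ⊆ ↑(hUfin.toFinset.powerset) := by
    intro X hX
    rw [Finset.mem_coe, Finset.mem_powerset]
    intro x hx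
    exact (Set.Finite.mem_toFinset hUfin).2 (key X hX hx)
  exact Set.Finite.subset (hUfin.toFinset.powerset).finite_toSet hsub

lemma not_lf : ¬ SBLocallyFinite (Finset ℕ) := by
  intro h
  have hA0 : A0.Finite := (Set.finite_singleton _).insert _
  have hfin := h A0 hA0
  have hinj : Function.Injective (fun m => S (m + 1)) := by
    intro a b hab
    have ha := card_S (by omega : 1 ≤ a + 1)
    have hb := card_S (by omega : 1 ≤ b + 1)
    simp only at hab
    rw [hab] at ha
    omega
  have hmem : ∀ m : ℕ, S (m + 1) ∈ {b : Finset ℕ | SBClosure A0 b} := fun m => (clS m).1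
  exact (Set.infinite_of_injective_forall_mem hinj hmem) hfin

end SBExample

/-- There exists a strong bimonoid which is almost idempotent, right-distributive,
and weakly locally finite, but not locally finite. -/


theorem statement0 :
    ∃ (B : Type) (inst : StrongBimonoid B),
      @AlmostIdempotent B inst ∧ @SBRightDistributive B inst ∧
      @WeaklyLocallyFinite B inst ∧ ¬ @SBLocallyFinite B inst :=
  ⟨Finset ℕ, SBExample.instB,
    SBExample.almost_idem, SBExample.right_dist, SBExample.wlf, SBExample.not_lf⟩
end

section
/- Let Σ be a ranked alphabet which contains a binary symbol, let B=(B,⊕,⊗,0,1) be a strong bimonoid, and let A⊆B be a finite subset. Then there exists a (Σ,B)-weighted tree automaton 𝒜 such that the image of its initial algebra semantics satisfies im(⟦𝒜⟧_init) = ⟨A⟩_{⊕,⊗,0,1}. In particular, if B is generated by A (i.e., ⟨A⟩_{⊕,⊗,0,1}=B), then im(⟦𝒜⟧_init) = B. -/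
/-- A ranked alphabet: a finite nonempty set of symbols with a rank map,
having at least one nullary symbol. -/
structure RankedAlphabet where
  symb : Type
  fintype_symb : Fintype symb
  nonempty_symb : Nonempty symb
  rk : symb → ℕ
  exists_nullary : ∃ σ, rk σ = 0

attribute [instance] RankedAlphabet.fintype_symb RankedAlphabet.nonempty_symb

/-- Trees (ground terms) over a ranked alphabet. -/
inductive RTree (S : RankedAlphabet) : Type
  | node (σ : S.symb) (ts : Fin (S.rk σ) → RTree S) : RTree S

/-- A weighted tree automaton over the ranked alphabet `S` and the strong bimonoid `B`. -/
structure WTA (S : RankedAlphabet) (B : Type) [StrongBimonoid B] where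
  Q : Type
  fintypeQ : Fintype Q
  nonemptyQ : Nonempty Q
  δ : (σ : S.symb) → (Fin (S.rk σ) → Q) → Q → B
  F : Q → B

attribute [instance] WTA.fintypeQ WTA.nonemptyQ

variable {S : RankedAlphabet} {B : Type} [StrongBimonoid B]

/-- The vector `h_𝒜(t) ∈ B^Q`:
`h_𝒜(σ(t_1,…,t_k))_q = ⊕_{q_1⋯q_k ∈ Q^k} (⊗_i h_𝒜(t_i)_{q_i}) ⊗ δ_k(q_1⋯q_k,σ,q)`. -/
def WTA.h (M : WTA S B) : RTree S → M.Q → B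
  | .node σ ts => fun q =>
      ∑ qs : Fin (S.rk σ) → M.Q,
        (((List.finRange (S.rk σ)).map (fun i => M.h (ts i) (qs i))).prod) * M.δ σ qs q

/-- The initial algebra semantics `⟦𝒜⟧_init(t) = ⊕_{q ∈ Q} h_𝒜(t)_q ⊗ F_q`. -/
noncomputable def WTA.initSem (M : WTA S B) (t : RTree S) : B :=
  ∑ q, M.h t q * M.F q

section Construction

open scoped Classical

variable {B : Type} [StrongBimonoid B]

lemma SBClosure.list_prod {A : Set B} :
    ∀ l : List B, (∀ x ∈ l, SBClosure A x) → SBClosure A l.prod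
  | [], _ => by simpa using SBClosure.one
  | x :: xs, h => by
      rw [List.prod_cons]
      exact (h x (by simp)).mul (SBClosure.list_prod xs fun y hy => h y (by simp [hy]))

lemma SBClosure.finset_sum {A : Set B} {ι : Type*} (s : Finset ι) (f : ι → B)
    (h : ∀ i ∈ s, SBClosure A (f i)) : SBClosure A (∑ i ∈ s, f i) :=
  Finset.sum_induction f (fun b => SBClosure A b) (fun _ _ ha hb => ha.add hb)
    SBClosure.zero h

/-- state space -/
abbrev QC (n : ℕ) : Type := Fin 3 ⊕ Fin (n + 1)

def qu {n : ℕ} : QC n := Sum.inl 0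
def qv1 {n : ℕ} : QC n := Sum.inl 1
def qv2 {n : ℕ} : QC n := Sum.inl 2
def qd {n : ℕ} (j : Fin (n + 1)) : QC n := Sum.inr j
def qd0 {n : ℕ} : QC n := Sum.inr ⟨0, Nat.succ_pos _⟩

/-- constant table: `cval 0 = 1`, `cval (j+1) = l[j]` -/
def cval (l : List B) (j : Fin (l.length + 1)) : B :=
  (1 :: l).get (Fin.cast (by simp) j)

/-- δ table targeting the value state `qv1`, for the binary symbol -/
def v1tab (l : List B) (p : QC l.length × QC l.length) : B :=
  if p.1 = qv1 ∧ p.2 = qv1 then 1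
  else if p.1 = qv2 ∧ p.2 = qd0 then 1
  else if p.1 = qd0 then Sum.elim (fun _ => (0 : B)) (fun j => cval l j) p.2
  else 0

/-- δ table targeting the sum state `qv2`, for the binary symbol -/
def v2tab (n : ℕ) (p : QC n × QC n) : B :=
  if p = (qv1, qu) then 1 else if p = (qu, qv1) then (1 : B) else 0

noncomputable def mkδ (S : RankedAlphabet) (α s2 : S.symb) (l : List B)
    (σ : S.symb) (qs : Fin (S.rk σ) → QC l.length) (q : QC l.length) : B :=
  match q with
  | Sum.inl i =>
      if i = 0 then (if ∀ j, qs j = qu then 1 else 0)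
      else if h : S.rk σ = 2 then
        (if σ = s2 then
          (if i = 1 then v1tab l (qs ⟨0, by omega⟩, qs ⟨1, by omega⟩)
           else v2tab l.length (qs ⟨0, by omega⟩, qs ⟨1, by omega⟩))
         else 0)
      else 0
  | Sum.inr j =>
      if (j : ℕ) = 0 then (if σ = α then 1 else 0)
      else if h : S.rk σ = 2 then
        (if σ = s2 ∧ qs ⟨0, by omega⟩ = qd ⟨(j : ℕ) - 1, by omega⟩ ∧
            qs ⟨1, by omega⟩ = qd0 then 1 else 0)
      else 0

noncomputable def mkM (S : RankedAlphabet) (α s2 : S.symb) (l : List B) : WTA S B :=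
  ⟨QC l.length, inferInstance, ⟨qu⟩, mkδ S α s2 l,
    fun q => if q = qv1 then 1 else 0⟩

end Construction

section Helpers

variable {B : Type} [StrongBimonoid B]

lemma sum_pi_fin_zero {Q : Type*} [Fintype Q] {k : ℕ} (hk : k = 0)
    (g : Fin k → Q → B) (d : (Fin k → Q) → B) (q0 : Fin k → Q) :
    (∑ qs : Fin k → Q, ((List.finRange k).map (fun i => g i (qs i))).prod * d qs) = d q0 := by
  subst hk
  haveI : Unique (Fin 0 → Q) := ⟨⟨q0⟩, fun f => funext fun i => i.elim0⟩
  rw [Fintype.sum_unique]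
  simp [Unique.eq_default q0]

lemma sum_pi_fin_two {Q : Type*} [Fintype Q] {k : ℕ} (hk : k = 2)
    (g : Fin k → Q → B) (d : (Fin k → Q) → B) :
    (∑ qs : Fin k → Q, ((List.finRange k).map (fun i => g i (qs i))).prod * d qs)
      = ∑ p : Q × Q, g ⟨0, by omega⟩ p.1 * g ⟨1, by omega⟩ p.2
          * d (fun i => if (i : ℕ) = 0 then p.1 else p.2) := by
  subst hk
  rw [← Equiv.sum_comp (finTwoArrowEquiv Q).symm]
  apply Finset.sum_congr rfl
  intro p _
  have he : (finTwoArrowEquiv Q).symm p = fun i : Fin 2 => if (i : ℕ) = 0 then p.1 else p.2 := by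
    funext i; fin_cases i <;> rfl
  rw [he]
  have hfr : List.finRange 2 = [0, 1] := by decide
  rw [hfr]
  simp [mul_assoc]

lemma sum_single_pt {Q : Type*} [Fintype Q] [DecidableEq Q]
    (f g : Q → B) (a b : Q) :
    (∑ p : Q × Q, f p.1 * g p.2 * (if p.1 = a ∧ p.2 = b then (1 : B) else 0))
      = f a * g b := by
  rw [Finset.sum_eq_single (a, b)]
  · simp
  · rintro ⟨x, y⟩ - hne
    have : ¬(x = a ∧ y = b) := by
      rintro ⟨rfl, rfl⟩; exact hne rfl
    simp [this]
  · simp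

lemma sum_v2 {n : ℕ} (f g : QC n → B) :
    (∑ p : QC n × QC n, f p.1 * g p.2 * v2tab n p) = f qv1 * g qu + f qu * g qv1 := by
  classical
  have hsub : (∑ p : QC n × QC n, f p.1 * g p.2 * v2tab n p)
      = ∑ p ∈ ({(qv1, qu), (qu, qv1)} : Finset (QC n × QC n)), f p.1 * g p.2 * v2tab n p := by
    refine (Finset.sum_subset (Finset.subset_univ _) ?_).symm
    rintro p - hns
    simp only [Finset.mem_insert, Finset.mem_singleton] at hns
    push_neg at hns
    have hz : (v2tab n p : B) = 0 := by
      simp only [v2tab]; rw [if_neg hns.1, if_neg hns.2]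
    simp [hz]
  rw [hsub, Finset.sum_pair (by simp [qu, qv1, Prod.ext_iff])]
  simp [v2tab, qu, qv1, Prod.ext_iff]

lemma sum_v1 {l : List B} (f g : QC l.length → B) :
    (∑ p : QC l.length × QC l.length, f p.1 * g p.2 * v1tab l p)
      = (f qv1 * g qv1 + f qv2 * g qd0)
        + ∑ j : Fin (l.length + 1), f qd0 * g (qd j) * cval l j := by
  classical
  set s : Finset (QC l.length × QC l.length) :=
    ({(qv1, qv1), (qv2, qd0)} : Finset _) ∪
      Finset.univ.image (fun j : Fin (l.length + 1) => ((qd0 : QC l.length), qd j)) with hs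
  have hsub : (∑ p : QC l.length × QC l.length, f p.1 * g p.2 * v1tab l p)
      = ∑ p ∈ s, f p.1 * g p.2 * v1tab l p := by
    refine (Finset.sum_subset (Finset.subset_univ s) ?_).symm
    rintro ⟨x, y⟩ - hns
    have hx : v1tab l (x, y) = 0 := by
      simp only [v1tab]
      split
      · rename_i hxy
        exact absurd (by simp [hs, hxy.1, hxy.2]) hns
      split
      · rename_i hxy
        exact absurd (by simp [hs, hxy.1, hxy.2]) hns
      split
      · rename_i hx0
        rcases y with i | j
        · rfl
        · exact absurd (by simp [hs, hx0, qd]) hns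
      · rfl
    simp [hx]
  have hne : ((qv1, qv1) : QC l.length × QC l.length) ≠ (qv2, qd0) := by
    simp [qv1, qv2, qd0, Prod.ext_iff]
  have hinj : ∀ a ∈ (Finset.univ : Finset (Fin (l.length + 1))), ∀ b ∈ Finset.univ,
      ((qd0 : QC l.length), qd a) = ((qd0 : QC l.length), qd b) → a = b := by
    intro a _ b _ hab
    simpa [qd, Prod.ext_iff] using hab
  have hdisj : Disjoint ({(qv1, qv1), (qv2, qd0)} : Finset (QC l.length × QC l.length))
      (Finset.univ.image (fun j : Fin (l.length + 1) => ((qd0 : QC l.length), qd j))) := by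
    rw [Finset.disjoint_left]
    rintro ⟨x, y⟩ hxy him
    simp only [Finset.mem_image, Finset.mem_univ, true_and] at him
    obtain ⟨j, hj⟩ := him
    have hx : x = qd0 := by
      rw [Prod.ext_iff] at hj; exact hj.1.symm
    simp only [Finset.mem_insert, Finset.mem_singleton, Prod.ext_iff] at hxy
    rcases hxy with h | h
    · exact absurd (hx ▸ h.1) (by simp [qd0, qv1])
    · exact absurd (hx ▸ h.1) (by simp [qd0, qv2])
  rw [hsub, hs, Finset.sum_union hdisj, Finset.sum_pair hne, Finset.sum_image hinj]
  have e1 : v1tab l ((qv1 : QC l.length), (qv1 : QC l.length)) = 1 := by simp [v1tab]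
  have e2 : v1tab l ((qv2 : QC l.length), (qd0 : QC l.length)) = 1 := by
    simp [v1tab, qv1, qv2, qd0]
  have e3 : ∀ j : Fin (l.length + 1), v1tab l ((qd0 : QC l.length), qd j) = cval l j := by
    intro j; simp [v1tab, qv1, qv2, qd0, qd]
  simp only [e1, e2, e3, mul_one]

end Helpers

section Steps

open scoped Classical

variable {B : Type} [StrongBimonoid B] {S : RankedAlphabet}

/-- the leaf tree built from a nullary symbol -/
def leafT (α : S.symb) (hα : S.rk α = 0) : RTree S :=
  .node α (fun i => absurd i.isLt (by omega))

/-- binary-node tree -/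
def binT (s2 : S.symb) (h2 : S.rk s2 = 2) (t0 t1 : RTree S) : RTree S :=
  .node s2 (fun i => if (i : ℕ) = 0 then t0 else t1)

lemma alpha_ne_s2 {α s2 : S.symb} (hα : S.rk α = 0) (h2 : S.rk s2 = 2) : α ≠ s2 :=
  fun h => by rw [h, h2] at hα; omega

variable (α s2 : S.symb) (l : List B)

lemma h_u : ∀ t : RTree S, (mkM S α s2 l).h t qu = 1 := by
  intro t
  induction t with
  | node σ ts ih =>
    simp only [WTA.h]
    have hδ : ∀ qs : Fin (S.rk σ) → QC l.length,
        (mkM S α s2 l).δ σ qs qu = if ∀ j, qs j = qu then 1 else 0 := by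
      intro qs; simp [mkM, mkδ, qu]
    refine (Finset.sum_eq_single (fun _ : Fin (S.rk σ) => (qu : (mkM S α s2 l).Q))
      ?_ ?_).trans ?_
    · intro qs _ hne
      rw [hδ, if_neg (fun hall => hne (funext hall)), mul_zero]
    · intro hmem; exact absurd (Finset.mem_univ _) hmem
    · rw [hδ, if_pos (fun j => rfl), mul_one]
      apply List.prod_eq_one
      intro x hx
      simp only [List.mem_map] at hx
      obtain ⟨i, -, rfl⟩ := hx
      exact ih i

lemma h_leaf (hα : S.rk α = 0) (q : QC l.length) :
    (mkM S α s2 l).h (leafT α hα) q = mkδ S α s2 l α (fun _ => qu) q := by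
  simp only [leafT, WTA.h]
  exact sum_pi_fin_zero hα (fun i q' => (mkM S α s2 l).h (absurd i.isLt (by omega)) q')
    (fun qs => (mkM S α s2 l).δ α qs q) (fun _ => qu)

lemma h_leaf_v1 (hα : S.rk α = 0) : (mkM S α s2 l).h (leafT α hα) qv1 = 0 := by
  rw [h_leaf]; simp [mkδ, qv1, hα]

lemma h_leaf_v2 (hα : S.rk α = 0) : (mkM S α s2 l).h (leafT α hα) qv2 = 0 := by
  rw [h_leaf]; simp [mkδ, qv2, hα]

lemma h_leaf_d (hα : S.rk α = 0) (j : Fin (l.length + 1)) :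
    (mkM S α s2 l).h (leafT α hα) (qd j) = if (j : ℕ) = 0 then 1 else 0 := by
  rw [h_leaf]
  by_cases hj : (j : ℕ) = 0 <;> simp [mkδ, qd, hα, hj]

lemma h_leaf_d0 (hα : S.rk α = 0) : (mkM S α s2 l).h (leafT α hα) qd0 = 1 := by
  have h1 : (qd0 : QC l.length) = qd ⟨0, Nat.succ_pos _⟩ := rfl
  rw [h1, h_leaf_d]
  simp

lemma h_bin (h2 : S.rk s2 = 2) (t0 t1 : RTree S) (q : QC l.length) :
    (mkM S α s2 l).h (binT s2 h2 t0 t1) q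
      = ∑ p : QC l.length × QC l.length,
          (mkM S α s2 l).h t0 p.1 * (mkM S α s2 l).h t1 p.2 *
            mkδ S α s2 l s2 (fun i => if (i : ℕ) = 0 then p.1 else p.2) q := by
  simp only [binT, WTA.h]
  exact sum_pi_fin_two h2
    (fun i q' => (mkM S α s2 l).h (if (i : ℕ) = 0 then t0 else t1) q')
    (fun qs => (mkM S α s2 l).δ s2 qs q)

lemma hbin_v1 (h2 : S.rk s2 = 2) (t0 t1 : RTree S) :
    (mkM S α s2 l).h (binT s2 h2 t0 t1) qv1
      = ((mkM S α s2 l).h t0 qv1 * (mkM S α s2 l).h t1 qv1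
          + (mkM S α s2 l).h t0 qv2 * (mkM S α s2 l).h t1 qd0)
        + ∑ j : Fin (l.length + 1),
            (mkM S α s2 l).h t0 qd0 * (mkM S α s2 l).h t1 (qd j) * cval l j := by
  rw [h_bin]
  have hδ : ∀ p : QC l.length × QC l.length,
      mkδ S α s2 l s2 (fun i => if (i : ℕ) = 0 then p.1 else p.2) qv1 = v1tab l p := by
    intro p; simp [mkδ, qv1, h2]
  rw [Finset.sum_congr rfl fun p _ => by rw [hδ p]]
  exact sum_v1 _ _

lemma hbin_v2 (h2 : S.rk s2 = 2) (t0 t1 : RTree S) :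
    (mkM S α s2 l).h (binT s2 h2 t0 t1) qv2
      = (mkM S α s2 l).h t0 qv1 * (mkM S α s2 l).h t1 qu
        + (mkM S α s2 l).h t0 qu * (mkM S α s2 l).h t1 qv1 := by
  rw [h_bin]
  have hδ : ∀ p : QC l.length × QC l.length,
      mkδ S α s2 l s2 (fun i => if (i : ℕ) = 0 then p.1 else p.2) qv2 = v2tab l.length p := by
    intro p; simp [mkδ, qv2, h2]
  rw [Finset.sum_congr rfl fun p _ => by rw [hδ p]]
  exact sum_v2 _ _

lemma hbin_d0 (hα : S.rk α = 0) (h2 : S.rk s2 = 2) (t0 t1 : RTree S) :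
    (mkM S α s2 l).h (binT s2 h2 t0 t1) qd0 = 0 := by
  rw [h_bin]
  have hδ : ∀ p : QC l.length × QC l.length,
      mkδ S α s2 l s2 (fun i => if (i : ℕ) = 0 then p.1 else p.2) qd0 = 0 := by
    intro p
    simp [mkδ, qd0, (alpha_ne_s2 hα h2).symm]
  simp only [hδ, mul_zero, Finset.sum_const_zero]

lemma hbin_dsucc (h2 : S.rk s2 = 2) (t0 t1 : RTree S) (j : ℕ) (hj : j + 1 < l.length + 1) :
    (mkM S α s2 l).h (binT s2 h2 t0 t1) (qd ⟨j + 1, hj⟩)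
      = (mkM S α s2 l).h t0 (qd ⟨j, by omega⟩) * (mkM S α s2 l).h t1 qd0 := by
  rw [h_bin]
  have hδ : ∀ p : QC l.length × QC l.length,
      mkδ S α s2 l s2 (fun i => if (i : ℕ) = 0 then p.1 else p.2) (qd ⟨j + 1, hj⟩)
        = if p.1 = (qd ⟨j, by omega⟩ : QC l.length) ∧ p.2 = qd0 then 1 else 0 := by
    intro p; simp [mkδ, qd, qd0, h2]; congr
  rw [Finset.sum_congr rfl fun p _ => by rw [hδ p]]
  exact sum_single_pt _ _ _ _

lemma initSem_eq (t : RTree S) :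
    (mkM S α s2 l).initSem t = (mkM S α s2 l).h t qv1 := by
  rw [WTA.initSem]
  refine (Finset.sum_eq_single (qv1 : (mkM S α s2 l).Q) ?_ ?_).trans ?_
  · intro q _ hq
    have hF : (mkM S α s2 l).F q = 0 := by simp [mkM, hq]
    rw [hF, mul_zero]
  · intro hmem; exact absurd (Finset.mem_univ _) hmem
  · have hF : (mkM S α s2 l).F qv1 = 1 := by simp [mkM]
    rw [hF, mul_one]

end Steps

section Final

open scoped Classical

variable {B : Type} [StrongBimonoid B] {S : RankedAlphabet}

/-- comb trees encoding indices -/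
def combT (α s2 : S.symb) (hα : S.rk α = 0) (h2 : S.rk s2 = 2) : ℕ → RTree S
  | 0 => leafT α hα
  | i + 1 => binT s2 h2 (combT α s2 hα h2 i) (leafT α hα)

variable (α s2 : S.symb) (l : List B)

lemma sum_dpt (i : ℕ) (hi : i < l.length + 1) (c : Fin (l.length + 1) → B) :
    (∑ j : Fin (l.length + 1), (if (j : ℕ) = i then (1 : B) else 0) * c j) = c ⟨i, hi⟩ := by
  rw [Finset.sum_eq_single (⟨i, hi⟩ : Fin (l.length + 1))]
  · simp
  · intro j _ hne
    rw [if_neg (fun h => hne (Fin.ext h)), zero_mul]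
  · simp

lemma h_comb_d (hα : S.rk α = 0) (h2 : S.rk s2 = 2) :
    ∀ (i : ℕ) (j : Fin (l.length + 1)),
      (mkM S α s2 l).h (combT α s2 hα h2 i) (qd j) = if (j : ℕ) = i then 1 else 0 := by
  intro i
  induction i with
  | zero =>
    intro j
    simp only [combT]
    rw [h_leaf_d]
  | succ i ih =>
    rintro ⟨jj, hj⟩
    simp only [combT]
    match jj, hj with
    | 0, hj =>
      have e : (qd ⟨0, hj⟩ : QC l.length) = qd0 := rfl
      rw [e, hbin_d0 α s2 l hα h2]
      simp
    | jj + 1, hj =>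
      rw [hbin_dsucc α s2 l h2 _ _ jj hj, h_leaf_d0, mul_one]
      have e : (qd ⟨jj, by omega⟩ : QC l.length) = qd ⟨jj, by omega⟩ := rfl
      rw [ih ⟨jj, by omega⟩]
      by_cases hji : jj = i <;> simp [hji]

lemma h_comb1_v1 (hα : S.rk α = 0) (h2 : S.rk s2 = 2) :
    (mkM S α s2 l).h (combT α s2 hα h2 1) qv1 = 1 := by
  show (mkM S α s2 l).h (binT s2 h2 (leafT α hα) (leafT α hα)) qv1 = 1
  rw [hbin_v1 α s2 l h2, h_leaf_v1, h_leaf_v2, h_leaf_d0]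
  simp only [h_leaf_d α s2 l hα, h_leaf_d0 α s2 l hα, zero_mul, mul_one, zero_add, one_mul]
  rw [sum_dpt l 0 (Nat.succ_pos _)]
  rfl

lemma h_comb1_v2 (hα : S.rk α = 0) (h2 : S.rk s2 = 2) :
    (mkM S α s2 l).h (combT α s2 hα h2 1) qv2 = 0 := by
  show (mkM S α s2 l).h (binT s2 h2 (leafT α hα) (leafT α hα)) qv2 = 0
  rw [hbin_v2 α s2 l h2]
  simp [h_leaf_v1 α s2 l hα, h_u α s2 l]

lemma delta_mem {A : Set B} (hal : ∀ a ∈ l, a ∈ A) (σ : S.symb)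
    (qs : Fin (S.rk σ) → QC l.length) (q : QC l.length) :
    SBClosure A (mkδ S α s2 l σ qs q) := by
  have hc : ∀ j, SBClosure A (cval l j) := by
    intro j
    have hmem : cval l j ∈ (1 :: l) := List.get_mem (1 :: l) (Fin.cast (by simp) j)
    rcases List.mem_cons.mp hmem with h | h
    · rw [h]; exact .one
    · exact .base (hal _ h)
  have hv1 : ∀ p : QC l.length × QC l.length, SBClosure A (v1tab l p) := by
    rintro ⟨p1, p2⟩
    rw [v1tab]
    split
    · exact .one
    split
    · exact .one
    split
    · rcases p2 with i | j
      · exact .zero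
      · exact hc j
    · exact .zero
  have hv2 : ∀ p : QC l.length × QC l.length, SBClosure A (v2tab l.length p) := by
    intro p
    rw [v2tab]
    split
    · exact .one
    split
    · exact .one
    · exact .zero
  rcases q with i | j
  · simp only [mkδ]
    split_ifs <;> first
      | exact .one
      | exact .zero
      | apply hv1
      | apply hv2
  · simp only [mkδ]
    split_ifs <;> first
      | exact .one
      | exact .zero

lemma sound {A : Set B} (hal : ∀ a ∈ l, a ∈ A) :
    ∀ (t : RTree S) (q : QC l.length), SBClosure A ((mkM S α s2 l).h t q) := by
  intro t
  induction t with
  | node σ ts ih =>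
    intro q
    simp only [WTA.h]
    apply SBClosure.finset_sum
    intro qs _
    apply SBClosure.mul
    · apply SBClosure.list_prod
      intro x hx
      simp only [List.mem_map] at hx
      obtain ⟨i, -, rfl⟩ := hx
      exact ih i _
    · exact delta_mem α s2 l hal σ qs q

lemma complete (hα : S.rk α = 0) (h2 : S.rk s2 = 2) {A : Set B} (hal : ∀ a ∈ A, a ∈ l) :
    ∀ b : B, SBClosure A b →
      ∃ t : RTree S, (mkM S α s2 l).h t qv1 = b ∧ (mkM S α s2 l).h t qd0 = 0 := by
  intro b hb
  induction hb with
  | @base a ha =>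
    obtain ⟨i, hget⟩ := List.mem_iff_get.mp (hal _ ha)
    refine ⟨binT s2 h2 (leafT α hα) (combT α s2 hα h2 ((i : ℕ) + 1)), ?_, ?_⟩
    · rw [hbin_v1 α s2 l h2, h_leaf_v1, h_leaf_v2, h_leaf_d0]
      simp only [h_comb_d α s2 l hα h2, zero_mul, mul_one, zero_add, one_mul]
      rw [sum_dpt l ((i : ℕ) + 1) (by omega)]
      rw [← hget]
      rfl
    · exact hbin_d0 α s2 l hα h2 _ _
  | one =>
    exact ⟨combT α s2 hα h2 1, h_comb1_v1 α s2 l hα h2, hbin_d0 α s2 l hα h2 _ _⟩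
  | zero =>
    refine ⟨binT s2 h2 (combT α s2 hα h2 1) (leafT α hα), ?_, hbin_d0 α s2 l hα h2 _ _⟩
    rw [hbin_v1 α s2 l h2, h_leaf_v1, h_leaf_d0, mul_zero, h_comb1_v2 α s2 l hα h2,
      zero_mul, add_zero]
    have hd0 : (mkM S α s2 l).h (combT α s2 hα h2 1) qd0 = 0 :=
      hbin_d0 α s2 l hα h2 _ _
    simp only [hd0, zero_mul, Finset.sum_const_zero, add_zero]
  | @add x y hx hy ihx ihy =>
    obtain ⟨tx, htx, htx0⟩ := ihx
    obtain ⟨ty, hty, hty0⟩ := ihy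
    refine ⟨binT s2 h2 (binT s2 h2 tx ty) (leafT α hα), ?_, hbin_d0 α s2 l hα h2 _ _⟩
    rw [hbin_v1 α s2 l h2, h_leaf_v1, h_leaf_d0, mul_zero, mul_one]
    rw [hbin_v2 α s2 l h2, h_u, h_u, mul_one, one_mul, htx, hty]
    have hd0 : (mkM S α s2 l).h (binT s2 h2 tx ty) qd0 = 0 :=
      hbin_d0 α s2 l hα h2 _ _
    simp only [hd0, zero_mul, Finset.sum_const_zero, add_zero, zero_add]
  | @mul x y hx hy ihx ihy =>
    obtain ⟨tx, htx, htx0⟩ := ihx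
    obtain ⟨ty, hty, hty0⟩ := ihy
    refine ⟨binT s2 h2 tx ty, ?_, hbin_d0 α s2 l hα h2 _ _⟩
    rw [hbin_v1 α s2 l h2, htx, hty, htx0, hty0, mul_zero, add_zero]
    simp only [zero_mul, Finset.sum_const_zero, add_zero]

end Final

/-- If `Σ` contains a binary symbol and `A ⊆ B` is finite, then there is a wta `𝒜`
over `Σ` and `B` with `im(⟦𝒜⟧_init) = ⟨A⟩_{⊕,⊗,0,1}`; in particular, if `B` is
generated by `A` then `im(⟦𝒜⟧_init) = B`. -/
theorem statement2 (S : RankedAlphabet) (hbin : ∃ σ, S.rk σ = 2)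
    (B : Type) [StrongBimonoid B] (A : Set B) (hA : A.Finite) :
    ∃ M : WTA S B,
      Set.range M.initSem = {b : B | SBClosure A b} ∧
      ({b : B | SBClosure A b} = Set.univ → Set.range M.initSem = Set.univ) := by
  classical
  obtain ⟨α, hα⟩ := S.exists_nullary
  obtain ⟨s2, h2⟩ := hbin
  set l := hA.toFinset.toList with hl
  have hal1 : ∀ a ∈ l, a ∈ A := by
    intro a hx
    rw [hl, Finset.mem_toList] at hx
    exact hA.mem_toFinset.mp hx
  have hal2 : ∀ a ∈ A, a ∈ l := by
    intro a hx
    rw [hl, Finset.mem_toList]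
    exact hA.mem_toFinset.mpr hx
  have hmain : Set.range (mkM S α s2 l).initSem = {b : B | SBClosure A b} := by
    ext b
    simp only [Set.mem_range, Set.mem_setOf_eq]
    constructor
    · rintro ⟨t, rfl⟩
      rw [initSem_eq]
      exact sound α s2 l hal1 t qv1
    · intro hb
      obtain ⟨t, ht1, -⟩ := complete α s2 l hα h2 hal2 b hb
      exact ⟨t, by rw [initSem_eq, ht1]⟩
  exact ⟨mkM S α s2 l, hmain, fun h => by rw [hmain, h]⟩
end

section
/- Let Σ be a ranked alphabet containing a binary symbol and let B be a strong bimonoid which is not locally finite. Then there exists a (Σ,B)-weighted tree automaton 𝒜 such that the image im(⟦𝒜⟧_init) of its initial algebra semantics is infinite. -/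
variable {S : RankedAlphabet} {B : Type} [StrongBimonoid B]

/-! ### Auxiliary development for `statement3` -/

section St3Aux

variable {B : Type} [StrongBimonoid B]

/-- State set: 4 special states `o,s,m,a`, constant states `c i`, selector states `w k`. -/
abbrev St3Q (n : ℕ) : Type := Fin 4 ⊕ Fin n ⊕ Fin (n + 3)

variable {n : ℕ}

def st3o : St3Q n := .inl 0
def st3s : St3Q n := .inl 1
def st3m : St3Q n := .inl 2
def st3a : St3Q n := .inl 3
def st3c (i : Fin n) : St3Q n := .inr (.inl i)
def st3w (k : Fin (n + 3)) : St3Q n := .inr (.inr k)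

def st3wi (i : Fin n) : St3Q n := st3w ⟨i.val + 3, by omega⟩

def st3leafV (aEl : Fin n → B) : St3Q n → B
  | .inl j => if j.val ≤ 1 then 1 else 0
  | .inr (.inl i) => aEl i
  | .inr (.inr k) => if k.val = 0 then 1 else 0

def st3ind3 (q1 q2 : St3Q n) : B :=
  if ∃ i : Fin n, q1 = st3c i ∧ q2 = st3w ⟨i.val + 3, by omega⟩ then 1 else 0

def st3D (q1 q2 q : St3Q n) : B :=
  match q with
  | .inl j =>
    if j.val = 0 then (if q1 = st3o ∧ q2 = st3o then 1 else 0)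
    else if j.val = 1 then
      (if q1 = st3m ∧ q2 = st3w ⟨1, by omega⟩ then 1
       else if q1 = st3a ∧ q2 = st3w ⟨2, by omega⟩ then 1
       else st3ind3 q1 q2)
    else if j.val = 2 then (if q1 = st3s ∧ q2 = st3s then 1 else 0)
    else (if q1 = st3s ∧ q2 = st3o then 1 else if q1 = st3o ∧ q2 = st3s then 1 else 0)
  | .inr (.inl i) => if q1 = st3c i ∧ q2 = st3o then 1 else 0
  | .inr (.inr k) =>
    if ∃ k' : Fin (n + 3), q1 = st3w ⟨0, by omega⟩ ∧ q2 = st3w k' ∧ k'.val + 1 = k.val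
    then 1 else 0

lemma st3sum_ind {Q : Type} [Fintype Q] [DecidableEq Q] (x y : Q → B) (p1 p2 : Q) :
    (∑ q1 : Q, ∑ q2 : Q, x q1 * y q2 * (if q1 = p1 ∧ q2 = p2 then (1:B) else 0))
      = x p1 * y p2 := by
  have hrow : ∀ q1, (∑ q2 : Q, x q1 * y q2 * (if q1 = p1 ∧ q2 = p2 then (1:B) else 0))
      = if q1 = p1 then x q1 * y p2 else 0 := by
    intro q1
    by_cases h1 : q1 = p1 <;>
      simp [h1, mul_ite, mul_one, mul_zero, Finset.sum_ite_eq']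
  rw [Finset.sum_congr rfl (fun q1 _ => hrow q1)]
  simp [Finset.sum_ite_eq']

lemma st3sum_pairs {Q : Type} [Fintype Q] [DecidableEq Q] (f : Q → Q → B)
    (s : Finset (Q × Q)) (h0 : ∀ q1 q2, (q1, q2) ∉ s → f q1 q2 = 0) :
    (∑ q1 : Q, ∑ q2 : Q, f q1 q2) = ∑ p ∈ s, f p.1 p.2 := by
  rw [← Finset.sum_product']
  exact (Finset.sum_subset (Finset.subset_univ s)
    (fun p _ hp => h0 p.1 p.2 hp)).symm

lemma st3_hnode_zero {Q : Type} [Fintype Q] {k : ℕ} (hk : k = 0)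
    (g : Fin k → Q → B) (d : (Fin k → Q) → B) (qs0 : Fin k → Q) :
    (∑ qs : Fin k → Q, ((List.finRange k).map (fun i => g i (qs i))).prod * d qs) = d qs0 := by
  subst hk
  rw [Fintype.sum_unique]
  have h1 : (default : Fin 0 → Q) = qs0 := Subsingleton.elim _ _
  rw [h1]
  simp

lemma st3_hnode_two {Q : Type} [Fintype Q] {k : ℕ} (hk : k = 2)
    (g : Fin k → Q → B) (d : (Fin k → Q) → B) :
    (∑ qs : Fin k → Q, ((List.finRange k).map (fun i => g i (qs i))).prod * d qs)
      = ∑ q1 : Q, ∑ q2 : Q,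
          g ⟨0, by omega⟩ q1 * g ⟨1, by omega⟩ q2 * d (fun i => if i.val = 0 then q1 else q2) := by
  subst hk
  rw [← Equiv.sum_comp (piFinTwoEquiv (fun _ => Q)).symm, Fintype.sum_prod_type]
  refine Finset.sum_congr rfl fun q1 _ => Finset.sum_congr rfl fun q2 _ => ?_
  have hfun : ((piFinTwoEquiv (fun _ => Q)).symm (q1, q2))
      = (fun i : Fin 2 => if i.val = 0 then q1 else q2) := by
    funext i
    fin_cases i <;> rfl
  rw [hfun]
  have hlist : (List.finRange 2) = [⟨0, by omega⟩, ⟨1, by omega⟩] := rfl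
  rw [hlist]
  simp [mul_assoc]

variable (aEl : Fin n → B)

/-- The wta used in the proof of `statement3`. -/
def st3M (S : RankedAlphabet) (n : ℕ) (aEl : Fin n → B) : WTA S B where
  Q := St3Q n
  fintypeQ := inferInstance
  nonemptyQ := ⟨.inl 0⟩
  δ := fun σ qs q =>
    if h : S.rk σ = 2 then st3D (qs ⟨0, by omega⟩) (qs ⟨1, by omega⟩) q
    else if S.rk σ = 0 then st3leafV aEl q else 0
  F := fun q => if q = st3s then 1 else 0

variable {S : RankedAlphabet} (σb : S.symb) (σz : S.symb) (hz : S.rk σz = 0)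

def st3leaf : RTree S := .node σz (fun i => (Fin.cast hz i).elim0)

def st3bin (t1 t2 : RTree S) : RTree S := .node σb (fun i => if i.val = 0 then t1 else t2)

lemma st3_h_leaf (q : St3Q n) :
    (st3M S n aEl).h (st3leaf σz hz) q = st3leafV aEl q := by
  rw [st3leaf, WTA.h]
  beta_reduce
  rw [st3_hnode_zero hz _ _ (fun i => (Fin.cast hz i).elim0)]
  simp only [st3M]
  rw [dif_neg (by omega), if_pos hz]

lemma st3_h_bin (hb : S.rk σb = 2) (t1 t2 : RTree S) (q : St3Q n) :
    (st3M S n aEl).h (st3bin σb t1 t2) q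
      = ∑ q1 : St3Q n, ∑ q2 : St3Q n,
          (st3M S n aEl).h t1 q1 * (st3M S n aEl).h t2 q2 * st3D q1 q2 q := by
  rw [st3bin, WTA.h]
  beta_reduce
  rw [st3_hnode_two hb]
  refine Finset.sum_congr rfl fun q1 _ => Finset.sum_congr rfl fun q2 _ => ?_
  simp only [st3M]
  rw [dif_pos hb]
  norm_num
  rfl

lemma st3Hbin_o (hb : S.rk σb = 2) (t1 t2 : RTree S) :
    (st3M S n aEl).h (st3bin σb t1 t2) st3o
      = (st3M S n aEl).h t1 st3o * (st3M S n aEl).h t2 st3o := by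
  rw [st3_h_bin (hb := hb)]
  have hD : ∀ q1 q2 : St3Q n, st3D q1 q2 st3o
      = if q1 = st3o ∧ q2 = st3o then (1:B) else 0 := fun _ _ => rfl
  simp only [hD]
  exact st3sum_ind _ _ _ _

lemma st3Hbin_m (hb : S.rk σb = 2) (t1 t2 : RTree S) :
    (st3M S n aEl).h (st3bin σb t1 t2) st3m
      = (st3M S n aEl).h t1 st3s * (st3M S n aEl).h t2 st3s := by
  rw [st3_h_bin (hb := hb)]
  have hD : ∀ q1 q2 : St3Q n, st3D q1 q2 st3m
      = if q1 = st3s ∧ q2 = st3s then (1:B) else 0 := fun _ _ => rfl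
  simp only [hD]
  exact st3sum_ind _ _ _ _

lemma st3Hbin_c (hb : S.rk σb = 2) (i : Fin n) (t1 t2 : RTree S) :
    (st3M S n aEl).h (st3bin σb t1 t2) (st3c i)
      = (st3M S n aEl).h t1 (st3c i) * (st3M S n aEl).h t2 st3o := by
  rw [st3_h_bin (hb := hb)]
  have hD : ∀ q1 q2 : St3Q n, st3D q1 q2 (st3c i)
      = if q1 = st3c i ∧ q2 = st3o then (1:B) else 0 := fun _ _ => rfl
  simp only [hD]
  exact st3sum_ind _ _ _ _

lemma st3Hbin_a (hb : S.rk σb = 2) (t1 t2 : RTree S) :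
    (st3M S n aEl).h (st3bin σb t1 t2) st3a
      = (st3M S n aEl).h t1 st3s * (st3M S n aEl).h t2 st3o
        + (st3M S n aEl).h t1 st3o * (st3M S n aEl).h t2 st3s := by
  rw [st3_h_bin (hb := hb)]
  rw [st3sum_pairs _ ({(st3s, st3o), (st3o, st3s)} : Finset (St3Q n × St3Q n)) ?_]
  · rw [Finset.sum_insert (by simp [st3s, st3o]), Finset.sum_singleton]
    have e1 : st3D (n := n) st3s st3o st3a = (1:B) := rfl
    have e2 : st3D (n := n) st3o st3s st3a = (1:B) := rfl
    rw [e1, e2, mul_one, mul_one]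
  · intro q1 q2 hns
    have hD : st3D q1 q2 st3a
        = (if q1 = st3s ∧ q2 = st3o then 1
           else if q1 = st3o ∧ q2 = st3s then (1:B) else 0) := rfl
    rw [hD, if_neg (fun hc => hns (by simp [hc.1, hc.2])),
      if_neg (fun hc => hns (by simp [hc.1, hc.2])), mul_zero]

lemma st3Hbin_s (hb : S.rk σb = 2) (t1 t2 : RTree S) :
    (st3M S n aEl).h (st3bin σb t1 t2) st3s
      = (st3M S n aEl).h t1 st3m * (st3M S n aEl).h t2 (st3w ⟨1, by omega⟩)
        + ((st3M S n aEl).h t1 st3a * (st3M S n aEl).h t2 (st3w ⟨2, by omega⟩)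
        + ∑ i : Fin n,
            (st3M S n aEl).h t1 (st3c i) * (st3M S n aEl).h t2 (st3wi i)) := by
  rw [st3_h_bin (hb := hb)]
  set sup : Finset (St3Q n × St3Q n) :=
    insert (st3m, st3w ⟨1, by omega⟩) (insert (st3a, st3w ⟨2, by omega⟩)
      ((Finset.univ : Finset (Fin n)).image
        (fun i : Fin n => ((st3c i : St3Q n), st3wi i)))) with hsup
  have h0 : ∀ q1 q2 : St3Q n,
      (q1, q2) ∉ sup →
      (st3M S n aEl).h t1 q1 * (st3M S n aEl).h t2 q2 * st3D q1 q2 st3s = 0 := by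
    intro q1 q2 hns
    have hD : st3D q1 q2 st3s
        = (if q1 = st3m ∧ q2 = st3w ⟨1, by omega⟩ then 1
           else if q1 = st3a ∧ q2 = st3w ⟨2, by omega⟩ then (1:B)
           else st3ind3 q1 q2) := rfl
    have hz3 : st3D q1 q2 st3s = (0:B) := by
      rw [hD, if_neg (fun hc => hns (by simp [hsup, hc.1, hc.2])),
        if_neg (fun hc => hns (by simp [hsup, hc.1, hc.2])), st3ind3]
      refine if_neg ?_
      rintro ⟨i, h1, h2⟩
      refine hns ?_
      subst h1
      have h2' : q2 = st3wi i := h2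
      subst h2'
      simp [hsup]
      exact Or.inr (Or.inr ⟨i, rfl, rfl⟩)
    rw [hz3, mul_zero]
  rw [st3sum_pairs _ sup h0]
  have hm : (st3m (n := n), st3w ⟨1, by omega⟩) ∉
      insert (st3a, st3w ⟨2, by omega⟩)
      ((Finset.univ : Finset (Fin n)).image
        (fun i : Fin n => ((st3c i : St3Q n), st3wi i))) := by
    simp [st3m, st3a, st3c, st3w, Prod.ext_iff, Fin.ext_iff]
  have ha : (st3a (n := n), st3w ⟨2, by omega⟩) ∉
      ((Finset.univ : Finset (Fin n)).image
        (fun i : Fin n => ((st3c i : St3Q n), st3wi i))) := by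
    simp [st3a, st3c, Prod.ext_iff]
  have hinj : ∀ i ∈ (Finset.univ : Finset (Fin n)), ∀ j ∈ Finset.univ,
      (fun i : Fin n => ((st3c i : St3Q n), st3wi i)) i
        = (fun i : Fin n => ((st3c i : St3Q n), st3wi i)) j → i = j := by
    intro i _ j _ hij
    have := (Prod.ext_iff.mp hij).1
    simpa [st3c] using this
  rw [hsup, Finset.sum_insert hm, Finset.sum_insert ha, Finset.sum_image hinj]
  have e1 : st3D (n := n) st3m (st3w ⟨1, by omega⟩) st3s = (1:B) := rfl
  have e2 : st3D (n := n) st3a (st3w ⟨2, by omega⟩) st3s = (1:B) := rfl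
  rw [e1, e2, mul_one, mul_one]
  congr 1
  congr 1
  refine Finset.sum_congr rfl fun i _ => ?_
  have e3 : st3D (n := n) (st3c i) (st3wi i) st3s = (1:B) := by
    have h1 : st3D (n := n) (st3c i) (st3wi i) st3s
        = (st3ind3 (st3c i) (st3wi i) : B) := rfl
    rw [h1, st3ind3]
    exact if_pos ⟨i, rfl, rfl⟩
  rw [e3, mul_one]

lemma st3Hbin_w0 (hb : S.rk σb = 2) (k : Fin (n + 3)) (hk : k.val = 0) (t1 t2 : RTree S) :
    (st3M S n aEl).h (st3bin σb t1 t2) (st3w k) = 0 := by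
  rw [st3_h_bin (hb := hb)]
  have hD : ∀ q1 q2 : St3Q n, st3D q1 q2 (st3w k) = (0:B) := by
    intro q1 q2
    have h1 : st3D q1 q2 (st3w k)
        = (if ∃ k' : Fin (n + 3), q1 = st3w ⟨0, by omega⟩ ∧ q2 = st3w k' ∧ k'.val + 1 = k.val
           then (1:B) else 0) := rfl
    refine h1.trans (if_neg ?_)
    rintro ⟨k', _, _, h3⟩
    omega
  simp only [hD, mul_zero]
  simp

lemma st3Hbin_wsucc (hb : S.rk σb = 2) (k k' : Fin (n + 3)) (hk : k.val = k'.val + 1)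
    (t1 t2 : RTree S) :
    (st3M S n aEl).h (st3bin σb t1 t2) (st3w k)
      = (st3M S n aEl).h t1 (st3w ⟨0, by omega⟩) * (st3M S n aEl).h t2 (st3w k') := by
  rw [st3_h_bin (hb := hb)]
  have hD : ∀ q1 q2 : St3Q n, st3D q1 q2 (st3w k)
      = if q1 = st3w ⟨0, by omega⟩ ∧ q2 = st3w k' then (1:B) else 0 := by
    intro q1 q2
    have h1 : st3D q1 q2 (st3w k)
        = (if ∃ kk : Fin (n + 3), q1 = st3w ⟨0, by omega⟩ ∧ q2 = st3w kk ∧ kk.val + 1 = k.val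
           then (1:B) else 0) := rfl
    refine h1.trans (if_congr ?_ rfl rfl)
    constructor
    · rintro ⟨kk, h1', h2', h3'⟩
      refine ⟨h1', ?_⟩
      rw [h2']
      congr 1
      exact Fin.ext (by omega)
    · rintro ⟨h1', h2'⟩
      exact ⟨k', h1', h2', by omega⟩
  simp only [hD]
  exact st3sum_ind _ _ _ _

lemma st3leafV_o : st3leafV aEl st3o = 1 := rfl
lemma st3leafV_s : st3leafV aEl st3s = 1 := rfl
lemma st3leafV_m : st3leafV aEl st3m = 0 := rfl
lemma st3leafV_a : st3leafV aEl st3a = 0 := rfl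
lemma st3leafV_c (i : Fin n) : st3leafV aEl (st3c i) = aEl i := rfl
lemma st3leafV_w (k : Fin (n + 3)) : st3leafV aEl (st3w k) = if k.val = 0 then 1 else 0 := rfl
lemma st3leafV_w' (v : ℕ) (hv : v < n + 3) :
    st3leafV aEl (st3w ⟨v, hv⟩) = if v = 0 then 1 else 0 := rfl

/-- The selector trees `R_k`. -/
def st3R : ℕ → RTree S
  | 0 => st3leaf σz hz
  | k + 1 => st3bin σb (st3leaf σz hz) (st3R k)

lemma st3R_w (hb : S.rk σb = 2) (k : ℕ) (j : Fin (n + 3)) :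
    (st3M S n aEl).h (st3R σb σz hz k) (st3w j) = if j.val = k then (1:B) else 0 := by
  induction k generalizing j with
  | zero => rw [st3R, st3_h_leaf]; rfl
  | succ k ih =>
    rw [st3R]
    by_cases hj : j.val = 0
    · rw [st3Hbin_w0 (hb := hb) (k := j) (hk := hj)]
      rw [if_neg (by omega)]
    · have hjlt : j.val - 1 < n + 3 := by omega
      rw [st3Hbin_wsucc (σz := σz) (hb := hb) (k := j) (k' := ⟨j.val - 1, hjlt⟩) (hk := by show j.val = j.val - 1 + 1; omega)]
      rw [st3_h_leaf, ih]
      have h1 : (st3leafV aEl (st3w ⟨0, by omega⟩) : B) = 1 := rfl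
      rw [h1, one_mul]
      refine if_congr ?_ rfl rfl
      constructor
      · intro hh
        have hh' : j.val - 1 = k := hh
        omega
      · intro hh
        show j.val - 1 = k
        omega

lemma st3R_w' (hb : S.rk σb = 2) (k : ℕ) (v : ℕ) (hv : v < n + 3) :
    (st3M S n aEl).h (st3R σb σz hz k) (st3w ⟨v, hv⟩) = if v = k then (1:B) else 0 :=
  (st3R_w aEl σb σz hz hb k ⟨v, hv⟩).trans (if_congr Iff.rfl rfl rfl)

lemma st3R_o (hb : S.rk σb = 2) (k : ℕ) :
    (st3M S n aEl).h (st3R σb σz hz k) st3o = 1 := by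
  induction k with
  | zero => rw [st3R, st3_h_leaf]; rfl
  | succ k ih =>
    rw [st3R, st3Hbin_o (hb := hb), st3_h_leaf, ih, st3leafV_o, one_mul]

lemma st3_initSem (t : RTree S) :
    (st3M S n aEl).initSem t = (st3M S n aEl).h t st3s := by
  rw [WTA.initSem]
  have hF : ∀ q : St3Q n, (st3M S n aEl).F q = if q = st3s then (1:B) else 0 := fun _ => rfl
  show ∑ q : St3Q n, (st3M S n aEl).h t q * (if q = st3s then (1:B) else 0) = _
  simp only [mul_ite, mul_one, mul_zero, Finset.sum_ite_eq', Finset.mem_univ, ite_true]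
  exact (Finset.sum_eq_single st3s (fun b _ hb => if_neg hb) (fun h => absurd (Finset.mem_univ _) h)).trans (if_pos rfl)

include σz hz in
lemma st3_main (hb : S.rk σb = 2) (A : Set B) (hsub : ∀ a ∈ A, ∃ i : Fin n, aEl i = a)
    {b : B} (hcl : SBClosure A b) :
    ∃ t : RTree S, (st3M S n aEl).h t st3s = b ∧ (st3M S n aEl).h t st3o = 1
      ∧ ∀ i : Fin n, (st3M S n aEl).h t (st3c i) = aEl i := by
  induction hcl with
  | @base a ha =>
    obtain ⟨i, hi⟩ := hsub a ha
    refine ⟨st3bin σb (st3leaf σz hz) (st3R σb σz hz (i.val + 3)), ?_, ?_, ?_⟩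
    · rw [st3Hbin_s (σz := σz) (hb := hb)]
      simp only [st3_h_leaf, st3wi, st3leafV_m, st3leafV_a, st3leafV_c]
      rw [zero_mul, zero_mul, zero_add, zero_add]
      have hconv : ∀ j : Fin n,
          aEl j * (st3M S n aEl).h (st3R σb σz hz (i.val + 3)) (st3w ⟨j.val + 3, by omega⟩)
            = if j = i then aEl j else 0 := by
        intro j
        rw [st3R_w' (hb := hb), mul_ite, mul_one, mul_zero]
        refine if_congr ?_ rfl rfl
        constructor
        · intro hh
          exact Fin.ext (by omega)
        · intro hh
          subst hh; rfl
      rw [Finset.sum_congr rfl (fun j _ => hconv j), Finset.sum_ite_eq']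
      simp [hi]
    · rw [st3Hbin_o (hb := hb)]
      simp only [st3_h_leaf, st3leafV_o]
      rw [st3R_o (hb := hb), one_mul]
    · intro j
      rw [st3Hbin_c (hb := hb)]
      simp only [st3_h_leaf, st3leafV_c]
      rw [st3R_o (hb := hb), mul_one]
  | zero =>
    refine ⟨st3bin σb (st3leaf σz hz) (st3leaf σz hz), ?_, ?_, ?_⟩
    · rw [st3Hbin_s (σz := σz) (hb := hb)]
      simp only [st3_h_leaf, st3wi, st3leafV_m, st3leafV_a, st3leafV_c, st3leafV_w']
      rw [zero_mul, zero_mul, zero_add, zero_add]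
      have hconv : ∀ j : Fin n,
          aEl j * (if (j.val + 3 = 0) then (1:B) else 0) = 0 := by
        intro j
        rw [if_neg (by omega), mul_zero]
      rw [Finset.sum_congr rfl (fun j _ => hconv j), Finset.sum_const_zero]
    · rw [st3Hbin_o (hb := hb)]
      simp only [st3_h_leaf, st3leafV_o]
      rw [one_mul]
    · intro j
      rw [st3Hbin_c (hb := hb)]
      simp only [st3_h_leaf, st3leafV_c, st3leafV_o]
      rw [mul_one]
  | one =>
    refine ⟨st3leaf σz hz, ?_, ?_, ?_⟩
    · rw [st3_h_leaf]; rfl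
    · rw [st3_h_leaf]; rfl
    · intro j; rw [st3_h_leaf]; rfl
  | @add x y hx hy ihx ihy =>
    obtain ⟨tx, hxs, hxo, hxc⟩ := ihx
    obtain ⟨ty, hys, hyo, hyc⟩ := ihy
    refine ⟨st3bin σb (st3bin σb tx ty) (st3R σb σz hz 2), ?_, ?_, ?_⟩
    · rw [st3Hbin_s (σz := σz) (hb := hb)]
      simp only [st3wi]
      rw [st3R_w' (hb := hb), st3R_w' (hb := hb)]
      rw [if_neg (by omega), if_pos (by omega), mul_zero, zero_add, mul_one]
      rw [st3Hbin_a (hb := hb), hxs, hys, hxo, hyo, mul_one, one_mul]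
      have hconv : ∀ j : Fin n,
          (st3M S n aEl).h (st3bin σb tx ty) (st3c j)
              * (st3M S n aEl).h (st3R σb σz hz 2) (st3w ⟨j.val + 3, by omega⟩)
            = 0 := by
        intro j
        rw [st3R_w' (hb := hb), if_neg (by omega), mul_zero]
      rw [Finset.sum_congr rfl (fun j _ => hconv j), Finset.sum_const_zero, add_zero]
    · rw [st3Hbin_o (hb := hb), st3Hbin_o (hb := hb), hxo, hyo, st3R_o (hb := hb), mul_one, mul_one]
    · intro j
      rw [st3Hbin_c (hb := hb), st3Hbin_c (hb := hb), hxc, hyo, st3R_o (hb := hb), mul_one, mul_one]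
  | @mul x y hx hy ihx ihy =>
    obtain ⟨tx, hxs, hxo, hxc⟩ := ihx
    obtain ⟨ty, hys, hyo, hyc⟩ := ihy
    refine ⟨st3bin σb (st3bin σb tx ty) (st3R σb σz hz 1), ?_, ?_, ?_⟩
    · rw [st3Hbin_s (σz := σz) (hb := hb)]
      simp only [st3wi]
      rw [st3R_w' (hb := hb), st3R_w' (hb := hb)]
      rw [if_pos (by omega), if_neg (by omega), mul_zero, zero_add, mul_one]
      rw [st3Hbin_m (hb := hb), hxs, hys]
      have hconv : ∀ j : Fin n,
          (st3M S n aEl).h (st3bin σb tx ty) (st3c j)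
              * (st3M S n aEl).h (st3R σb σz hz 1) (st3w ⟨j.val + 3, by omega⟩)
            = 0 := by
        intro j
        rw [st3R_w' (hb := hb), if_neg (by omega), mul_zero]
      rw [Finset.sum_congr rfl (fun j _ => hconv j), Finset.sum_const_zero, add_zero]
    · rw [st3Hbin_o (hb := hb), st3Hbin_o (hb := hb), hxo, hyo, st3R_o (hb := hb), mul_one, mul_one]
    · intro j
      rw [st3Hbin_c (hb := hb), st3Hbin_c (hb := hb), hxc, hyo, st3R_o (hb := hb), mul_one, mul_one]

end St3Aux
/-- If `Σ` contains a binary symbol and the strong bimonoid `B` is not locally finite,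
then there is a wta over `Σ` and `B` whose initial algebra semantics has infinite image. -/
theorem statement3 (S : RankedAlphabet) (hbin : ∃ σ, S.rk σ = 2)
    (B : Type) [StrongBimonoid B] (h : ¬ SBLocallyFinite B) :
    ∃ M : WTA S B, (Set.range M.initSem).Infinite := by
  obtain ⟨σb, hb⟩ := hbin
  obtain ⟨σz, hz⟩ := S.exists_nullary
  rw [SBLocallyFinite] at h
  push_neg at h
  obtain ⟨A, hA, hinf⟩ := h
  set n := hA.toFinset.card with hn
  set e := hA.toFinset.equivFin with he
  set aEl : Fin n → B := fun i => ((e.symm i : hA.toFinset) : B) with haEl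
  have hsub : ∀ a ∈ A, ∃ i : Fin n, aEl i = a := by
    intro a ha
    refine ⟨e ⟨a, hA.mem_toFinset.mpr ha⟩, ?_⟩
    simp [haEl]
  refine ⟨st3M S n aEl, ?_⟩
  have hss : {b : B | SBClosure A b} ⊆ Set.range (st3M S n aEl).initSem := by
    intro b hbcl
    obtain ⟨t, hts, -, -⟩ :=
      st3_main (aEl := aEl) (σb := σb) (σz := σz) (hz := hz) (hb := hb) A hsub hbcl
    exact ⟨t, by rw [st3_initSem]; exact hts⟩
  exact Set.Infinite.mono hss hinf
end

section
/- There exists a weakly locally finite strong bimonoid B such that for each ranked alphabet Σ which contains a binary symbol there exists a (Σ,B)-weighted tree automaton 𝒜 for which the image im(⟦𝒜⟧_init) of its initial algebra semantics is an infinite set. -/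
variable {S : RankedAlphabet} {B : Type} [StrongBimonoid B]

/- ===== Auxiliary construction ===== -/

inductive BB : Type
  | zero : BB
  | one : BB
  | st : Finset ℕ → BB
  deriving DecidableEq

namespace BB

def E : BB → Finset ℕ
  | zero => ∅
  | one => ∅
  | st s => s

def add' : BB → BB → BB
  | zero, x => x
  | x, zero => x
  | x, y => st (E x ∪ E y)

def mul' : BB → BB → BB
  | zero, _ => zero
  | _, zero => zero
  | one, x => x
  | x, one => x
  | st _, st y => st (Finset.Icc 1 y.card)

instance instZero : Zero BB := ⟨zero⟩
instance instOne : One BB := ⟨one⟩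
instance instAddOp : Add BB := ⟨add'⟩
instance instMulOp : Mul BB := ⟨mul'⟩

instance instAdd : AddCommMonoid BB where
  add_assoc a b c := by
    cases a <;> cases b <;> cases c <;>
      simp [instAddOp, add', E, HAdd.hAdd, Add.add, Finset.union_assoc]
  zero_add a := by cases a <;> rfl
  add_zero a := by cases a <;> rfl
  add_comm a b := by
    cases a <;> cases b <;>
      simp [instAddOp, add', E, HAdd.hAdd, Add.add, Finset.union_comm]
  nsmul := nsmulRec

instance instMul : MonoidWithZero BB where
  mul_assoc a b c := by
    cases a <;> cases b <;> cases c <;>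
      simp [instMulOp, mul', HMul.hMul, Mul.mul, Nat.card_Icc]
  one_mul a := by cases a <;> rfl
  mul_one a := by cases a <;> rfl
  zero_mul a := by cases a <;> rfl
  mul_zero a := by cases a <;> rfl
  npow := npowRec

instance instSB : StrongBimonoid BB := { instAdd, instMul with }

@[simp] lemma zero_def : (0 : BB) = zero := rfl
@[simp] lemma one_def : (1 : BB) = one := rfl
lemma add_def (a b : BB) : a + b = add' a b := rfl
lemma mul_def (a b : BB) : a * b = mul' a b := rfl

@[simp] lemma one_add_one : (one : BB) + one = st ∅ := rfl
@[simp] lemma one_add_st (s : Finset ℕ) : (one : BB) + st s = st s := by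
  show add' one (st s) = st s; simp [add', E]
@[simp] lemma st_add_one (s : Finset ℕ) : st s + one = st s := by
  show add' (st s) one = st s; simp [add', E]
@[simp] lemma st_add_st (s u : Finset ℕ) : st s + st u = st (s ∪ u) := rfl
@[simp] lemma st_mul_st (s u : Finset ℕ) : st s * st u = st (Finset.Icc 1 u.card) := rfl
@[simp] lemma one_mul_x (x : BB) : one * x = x := one_mul x
@[simp] lemma x_mul_one (x : BB) : x * one = x := mul_one x
@[simp] lemma zero_mul_x (x : BB) : zero * x = x * zero := by
  cases x <;> rfl
@[simp] lemma x_mul_zero (x : BB) : x * zero = zero := mul_zero x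
@[simp] lemma zero_mul_x' (x : BB) : zero * x = zero := zero_mul x
@[simp] lemma zero_add_x (x : BB) : zero + x = x := zero_add x
@[simp] lemma x_add_zero (x : BB) : x + zero = x := add_zero x

end BB

/-- Reduction of a sum over `Fin k → Bool` when `k = 2`. -/
lemma sum_fin_two_bool {M : Type*} [AddCommMonoid M] {k : ℕ} (e : k = 2)
    (G : (Fin k → Bool) → M) :
    (∑ qs : Fin k → Bool, G qs)
      = ∑ p : Bool × Bool, G (fun i => if (i : ℕ) = 0 then p.1 else p.2) := by
  subst e
  refine Fintype.sum_equiv (finTwoArrowEquiv Bool) _ _ ?_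
  intro qs
  congr 1
  funext i
  fin_cases i <;> simp [finTwoArrowEquiv]

/-- Reduction of a sum over `Fin k → Bool` when `k = 0`. -/
lemma sum_fin_zero_bool {M : Type*} [AddCommMonoid M] {k : ℕ} (e : k = 0)
    (G : (Fin k → Bool) → M) :
    (∑ qs : Fin k → Bool, G qs) = G (fun i => absurd i.isLt (by omega)) := by
  subst e
  have hu : Unique (Fin 0 → Bool) := ⟨⟨fun i => absurd i.isLt (by omega)⟩,
    fun f => funext fun i => absurd i.isLt (by omega)⟩
  rw [Fintype.sum_unique]
  exact congrArg G (funext fun i => absurd i.isLt (by omega))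


/- ===== The automaton over an arbitrary ranked alphabet with a binary symbol ===== -/

lemma prod_fin_zero {k : ℕ} (e : k = 0) (f : Fin k → BB) :
    ((List.finRange k).map f).prod = 1 := by subst e; rfl

lemma prod_fin_two {k : ℕ} (e : k = 2) (f : Fin k → BB) :
    ((List.finRange k).map f).prod
      = f ⟨0, by omega⟩ * (f ⟨1, by omega⟩ * 1) := by subst e; rfl

/-- transition table for the binary symbol -/
def tabB : Bool → Bool → Bool → BB := fun q0 q1 q =>
  match q with
  | false => if q0 = false ∧ q1 = false then BB.one else BB.zero
  | true =>
      if q0 = true ∧ q1 = true then BB.one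
      else if q0 = false ∧ q1 = false then BB.st {0} else BB.zero

open Classical in
/-- the transition map -/
noncomputable def myδ (S : RankedAlphabet) (σ₀ σ₂ : S.symb)
    (σ : S.symb) (qs : Fin (S.rk σ) → Bool) (q : Bool) : BB :=
  if _h0 : S.rk σ = 0 then
    (if σ = σ₀ then (if q then BB.st {0} else BB.one) else BB.zero)
  else if _h2 : S.rk σ = 2 then
    (if σ = σ₂ then tabB (qs ⟨0, by omega⟩) (qs ⟨1, by omega⟩) q else BB.zero)
  else BB.zero

/-- the wta -/
noncomputable def myM (S : RankedAlphabet) (σ₀ σ₂ : S.symb) : WTA S BB :=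
  ⟨Bool, inferInstance, ⟨true⟩, myδ S σ₀ σ₂, fun q => if q then BB.one else BB.zero⟩

/-- the leaf tree -/
def tLeaf (S : RankedAlphabet) (σ₀ : S.symb) (e₀ : S.rk σ₀ = 0) : RTree S :=
  .node σ₀ (fun i => absurd i.isLt (by omega))

/-- the sequence of full binary trees -/
def tSeq (S : RankedAlphabet) (σ₀ σ₂ : S.symb) (e₀ : S.rk σ₀ = 0) : ℕ → RTree S :=
  fun n => Nat.rec (tLeaf S σ₀ e₀) (fun _ ih => .node σ₂ (fun _ => ih)) n

lemma myM_h_node (S : RankedAlphabet) (σ₀ σ₂ : S.symb) (σ : S.symb)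
    (ts : Fin (S.rk σ) → RTree S) (q : Bool) :
    (myM S σ₀ σ₂).h (.node σ ts) q
      = ∑ qs : Fin (S.rk σ) → Bool,
          (((List.finRange (S.rk σ)).map (fun i => (myM S σ₀ σ₂).h (ts i) (qs i))).prod)
            * myδ S σ₀ σ₂ σ qs q := rfl

lemma myM_initSem (S : RankedAlphabet) (σ₀ σ₂ : S.symb) (t : RTree S) :
    (myM S σ₀ σ₂).initSem t
      = ∑ q : Bool, (myM S σ₀ σ₂).h t q * (if q then BB.one else BB.zero) := rfl

lemma tSeq_zero (S : RankedAlphabet) (σ₀ σ₂ : S.symb) (e₀ : S.rk σ₀ = 0) :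
    tSeq S σ₀ σ₂ e₀ 0 = RTree.node σ₀ (fun i => absurd i.isLt (by omega)) := rfl

lemma tSeq_succ (S : RankedAlphabet) (σ₀ σ₂ : S.symb) (e₀ : S.rk σ₀ = 0) (n : ℕ) :
    tSeq S σ₀ σ₂ e₀ (n + 1) = RTree.node σ₂ (fun _ => tSeq S σ₀ σ₂ e₀ n) := rfl

/-- There exists a weakly locally finite strong bimonoid `B` such that, for each
ranked alphabet containing a binary symbol, some wta over `Σ` and `B` has an
infinite image of its initial algebra semantics. -/
theorem statement4 :
    ∃ (B : Type) (inst : StrongBimonoid B),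
      @WeaklyLocallyFinite B inst ∧
      ∀ S : RankedAlphabet, (∃ σ, S.rk σ = 2) →
        ∃ M : @WTA S B inst, (Set.range (@WTA.initSem S B inst M)).Infinite := by
  classical
  refine ⟨BB, BB.instSB, ?_, ?_⟩
  · -- weak local finiteness
    intro A hA
    set U : Finset ℕ :=
      hA.toFinset.sup (fun x => BB.E x ∪ Finset.Icc 1 (BB.E x).card) with hU
    have hsub : ∀ a ∈ A, BB.E a ∪ Finset.Icc 1 (BB.E a).card ⊆ U := by
      intro a ha
      exact Finset.le_sup (f := fun x => BB.E x ∪ Finset.Icc 1 (BB.E x).card)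
        (hA.mem_toFinset.mpr ha)
    have key : ∀ b, WeakClosure A b →
        b = BB.zero ∨ b = BB.one ∨ ∃ s : Finset ℕ, s ⊆ U ∧ b = BB.st s := by
      intro b hb
      induction hb with
      | @base a ha =>
        cases a with
        | zero => exact Or.inl rfl
        | one => exact Or.inr (Or.inl rfl)
        | st s =>
          exact Or.inr (Or.inr ⟨s,
            fun x hx => hsub _ ha (Finset.mem_union_left _ hx), rfl⟩)
      | zero => exact Or.inl rfl
      | one => exact Or.inr (Or.inl rfl)
      | @add b b' hb hb' ih ih' =>
        rcases ih with rfl | rfl | ⟨s, hs, rfl⟩ <;>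
          rcases ih' with rfl | rfl | ⟨u, hu, rfl⟩
        · exact Or.inl (by simp)
        · exact Or.inr (Or.inl (by simp))
        · exact Or.inr (Or.inr ⟨u, hu, by simp⟩)
        · exact Or.inr (Or.inl (by simp))
        · exact Or.inr (Or.inr ⟨∅, by simp, by simp⟩)
        · exact Or.inr (Or.inr ⟨u, hu, by simp⟩)
        · exact Or.inr (Or.inr ⟨s, hs, by simp⟩)
        · exact Or.inr (Or.inr ⟨s, hs, by simp⟩)
        · exact Or.inr (Or.inr ⟨s ∪ u, Finset.union_subset hs hu, by simp⟩)
      | @mulr b a hb ha ih =>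
        cases a with
        | zero => exact Or.inl (by simp)
        | one => simpa using ih
        | st Y =>
          rcases ih with rfl | rfl | ⟨s, hs, rfl⟩
          · exact Or.inl (by simp)
          · exact Or.inr (Or.inr ⟨Y,
              fun x hx => hsub _ ha (Finset.mem_union_left _ hx), by simp⟩)
          · exact Or.inr (Or.inr ⟨Finset.Icc 1 Y.card,
              fun x hx => hsub _ ha (Finset.mem_union_right _ hx), by simp⟩)
    have hss : {b : BB | WeakClosure A b} ⊆
        ↑(({BB.zero, BB.one} : Finset BB) ∪ U.powerset.image BB.st) := by
      intro b hb
      rcases key b hb with rfl | rfl | ⟨s, hs, rfl⟩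
      · simp
      · simp
      · simp only [Finset.coe_union, Set.mem_union, Finset.coe_image,
          Set.mem_image, Finset.mem_coe, Finset.mem_powerset]
        exact Or.inr ⟨s, hs, rfl⟩
    exact Set.Finite.subset (Finset.finite_toSet _) hss
  · -- the wta with infinite image
    rintro S ⟨σ₂, e₂⟩
    obtain ⟨σ₀, e₀⟩ := S.exists_nullary
    refine ⟨myM S σ₀ σ₂, ?_⟩
    have hδ0 : ∀ (qs : Fin (S.rk σ₀) → Bool) (q : Bool),
        myδ S σ₀ σ₂ σ₀ qs q = (if q then BB.st {0} else BB.one) := by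
      intro qs q
      unfold myδ
      rw [dif_pos e₀, if_pos rfl]
    have hδ2 : ∀ (qs : Fin (S.rk σ₂) → Bool) (q : Bool),
        myδ S σ₀ σ₂ σ₂ qs q
          = tabB (qs ⟨0, by omega⟩) (qs ⟨1, by omega⟩) q := by
      intro qs q
      unfold myδ
      rw [dif_neg (by omega), dif_pos e₂, if_pos rfl]
    have hleaf : ∀ q : Bool,
        (myM S σ₀ σ₂).h (tSeq S σ₀ σ₂ e₀ 0) q = (if q then BB.st {0} else BB.one) := by
      intro q
      rw [tSeq_zero, myM_h_node, sum_fin_zero_bool e₀, prod_fin_zero e₀, one_mul, hδ0]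
    have main : ∀ n, (myM S σ₀ σ₂).h (tSeq S σ₀ σ₂ e₀ n) true = BB.st (insert 0 (Finset.Icc 1 n))
        ∧ (myM S σ₀ σ₂).h (tSeq S σ₀ σ₂ e₀ n) false = BB.one := by
      intro n
      induction n with
      | zero =>
        refine ⟨?_, ?_⟩
        · rw [hleaf]; simp
        · rw [hleaf]; simp
      | succ n ih =>
        obtain ⟨iht, ihf⟩ := ih
        have hcard : (insert 0 (Finset.Icc 1 n)).card = n + 1 := by
          rw [Finset.card_insert_of_notMem (by simp), Nat.card_Icc]; omega
        have hstep : ∀ q : Bool, (myM S σ₀ σ₂).h (tSeq S σ₀ σ₂ e₀ (n+1)) q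
            = ∑ p : Bool × Bool,
                ((myM S σ₀ σ₂).h (tSeq S σ₀ σ₂ e₀ n) p.1
                  * ((myM S σ₀ σ₂).h (tSeq S σ₀ σ₂ e₀ n) p.2 * 1)) * tabB p.1 p.2 q := by
          intro q
          rw [tSeq_succ, myM_h_node, sum_fin_two_bool e₂]
          refine Finset.sum_congr rfl ?_
          intro p _
          rw [prod_fin_two e₂, hδ2]
          simp
        refine ⟨?_, ?_⟩
        · rw [hstep, Fintype.sum_prod_type, Fintype.sum_bool, Fintype.sum_bool,
            Fintype.sum_bool, iht, ihf]
          simp only [tabB, hcard]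
          norm_num
        · rw [hstep, Fintype.sum_prod_type, Fintype.sum_bool, Fintype.sum_bool,
            Fintype.sum_bool, iht, ihf]
          simp [tabB]
    have hsem : ∀ n, (myM S σ₀ σ₂).initSem (tSeq S σ₀ σ₂ e₀ n)
        = BB.st (insert 0 (Finset.Icc 1 n)) := by
      intro n
      obtain ⟨h1, h2⟩ := main n
      rw [myM_initSem, Fintype.sum_bool, h1, h2]
      simp
    apply Set.infinite_of_injective_forall_mem
      (f := fun n : ℕ => BB.st (insert 0 (Finset.Icc 1 n)))
    · intro n m hnm
      simp only [BB.st.injEq] at hnm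
      have hc : (insert 0 (Finset.Icc 1 n)).card = (insert 0 (Finset.Icc 1 m)).card := by
        rw [hnm]
      rw [Finset.card_insert_of_notMem (by simp),
        Finset.card_insert_of_notMem (by simp), Nat.card_Icc, Nat.card_Icc] at hc
      omega
    · intro n
      exact ⟨tSeq S σ₀ σ₂ e₀ n, hsem n⟩
end

section
/- Let Σ be a ranked alphabet containing a binary symbol, and let B=(B,⊕,⊗,0,1) be a semiring which is finitely generated (i.e., ⟨A⟩_{⊕,⊗,0,1}=B for some finite A⊆B). Then there exists a (Σ,B)-weighted tree automaton 𝒜 such that the image of its run semantics satisfies im(⟦𝒜⟧_run) = B. -/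
variable {S : RankedAlphabet} {B : Type} [StrongBimonoid B]

/-- The positions of a tree (as lists of natural numbers). -/
def RTree.pos : RTree S → Finset (List ℕ)
  | .node _ ts =>
      insert [] (Finset.univ.biUnion fun i => ((ts i).pos).image (fun w => (i : ℕ) :: w))

/-- The weight of a run `ρ` (given as a total map on positions) on a tree:
`wt(σ(t_1,…,t_k),ρ) = (⊗_i wt(t_i,ρ_i)) ⊗ δ_k(ρ(1)⋯ρ(k),σ,ρ(ε))`. -/
def WTA.wt (M : WTA S B) : RTree S → (List ℕ → M.Q) → B
  | .node σ ts => fun ρ =>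
      (((List.finRange (S.rk σ)).map
          (fun i => M.wt (ts i) (fun w => ρ ((i : ℕ) :: w)))).prod)
        * M.δ σ (fun i => ρ [(i : ℕ)]) (ρ [])

/-- Extend a run, defined on the positions of `t`, to a total map on `List ℕ`. -/
noncomputable def WTA.extend (M : WTA S B) (t : RTree S) (ρ : ↑(t.pos) → M.Q) :
    List ℕ → M.Q :=
  fun w => if h : w ∈ t.pos then ρ ⟨w, h⟩ else Classical.choice M.nonemptyQ

/-- The run semantics `⟦𝒜⟧_run(t) = ⊕_{ρ run of 𝒜 on t} wt(t,ρ) ⊗ F_{ρ(ε)}`. -/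
noncomputable def WTA.runSem (M : WTA S B) (t : RTree S) : B :=
  ∑ ρ : (↑(t.pos) → M.Q), M.wt t (M.extend t ρ) * M.F (M.extend t ρ [])

/-! ### Auxiliary distributivity lemmas (no `Semiring` instance on `B`). -/

lemma my_mul_sum (hld : SBLeftDistributive B) {ι : Type*} (s : Finset ι) (f : ι → B) (b : B) :
    b * ∑ x ∈ s, f x = ∑ x ∈ s, b * f x := by
  classical
  induction s using Finset.cons_induction with
  | empty => simp
  | cons a s ha ih => rw [Finset.sum_cons, Finset.sum_cons, hld, ih]

lemma my_sum_mul (hrd : SBRightDistributive B) {ι : Type*} (s : Finset ι) (f : ι → B) (b : B) :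
    (∑ x ∈ s, f x) * b = ∑ x ∈ s, f x * b := by
  classical
  induction s using Finset.cons_induction with
  | empty => simp
  | cons a s ha ih => rw [Finset.sum_cons, Finset.sum_cons, hrd, ih]

lemma prod_finRange_succ {β : Type*} [Monoid β] (k : ℕ) (f : Fin (k + 1) → β) :
    ((List.finRange (k + 1)).map f).prod
      = f 0 * ((List.finRange k).map fun i => f i.succ).prod := by
  rw [List.finRange_succ, List.map_cons, List.prod_cons, List.map_map]
  rfl

lemma fun_cons_eq {Q : Type} {k : ℕ} {R : Fin (k + 1) → Type} (r : ∀ i, R i → Q)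
    (ρ0 : R 0) (ρrest : ∀ i : Fin k, R i.succ) :
    (fun i => r i (Fin.cons ρ0 ρrest i))
      = Fin.cons (r 0 ρ0) (fun i => r i.succ (ρrest i)) := by
  funext i
  cases i using Fin.cases with
  | zero => rw [Fin.cons_zero, Fin.cons_zero]
  | succ i => rw [Fin.cons_succ, Fin.cons_succ]

/-- The key sum–product exchange lemma, by induction on the arity. -/
lemma core_exchange {Q : Type} [Fintype Q]
    (hld : SBLeftDistributive B) (hrd : SBRightDistributive B) :
    ∀ {k : ℕ} (R : Fin k → Type) [∀ i, Fintype (R i)]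
      (W : ∀ i, R i → B) (r : ∀ i, R i → Q) (H : Fin k → Q → B),
      (∀ i (f : Q → B), (∑ ρ : R i, W i ρ * f (r i ρ)) = ∑ q, H i q * f q) →
      ∀ g : (Fin k → Q) → B,
      (∑ ρs : (∀ i, R i),
          ((List.finRange k).map fun i => W i (ρs i)).prod * g (fun i => r i (ρs i)))
        = ∑ qs : Fin k → Q, ((List.finRange k).map fun i => H i (qs i)).prod * g qs := by
  intro k
  induction k with
  | zero =>
    intro R _ W r H IH g
    rw [Fintype.sum_unique, Fintype.sum_unique]
    simp only [List.finRange_zero, List.map_nil, List.prod_nil, one_mul]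
    exact congrArg g (Subsingleton.elim _ _)
  | succ k ihk =>
    intro R _ W r H IH g
    have hsummandW : ∀ (ρ0 : R 0) (ρrest : ∀ i : Fin k, R i.succ),
        ((List.finRange (k + 1)).map fun i => W i (Fin.cons ρ0 ρrest i)).prod
            * g (fun i => r i (Fin.cons ρ0 ρrest i))
          = W 0 ρ0 * (((List.finRange k).map fun i => W i.succ (ρrest i)).prod
              * g (Fin.cons (r 0 ρ0) fun i => r i.succ (ρrest i))) := by
      intro ρ0 ρrest
      rw [prod_finRange_succ, fun_cons_eq, mul_assoc]
      simp only [Fin.cons_zero, Fin.cons_succ]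
    have hsummandH : ∀ (q0 : Q) (qs' : Fin k → Q),
        ((List.finRange (k + 1)).map fun i => H i ((Fin.cons q0 qs' : Fin (k+1) → Q) i)).prod
            * g (Fin.cons q0 qs')
          = H 0 q0 * (((List.finRange k).map fun i => H i.succ (qs' i)).prod
              * g (Fin.cons q0 qs')) := by
      intro q0 qs'
      rw [prod_finRange_succ, mul_assoc]
      simp only [Fin.cons_zero, Fin.cons_succ]
    calc
      (∑ ρs : (∀ i, R i),
          ((List.finRange (k + 1)).map fun i => W i (ρs i)).prod * g (fun i => r i (ρs i)))
          = ∑ p : R 0 × (∀ i : Fin k, R i.succ),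
              ((List.finRange (k + 1)).map fun i => W i (Fin.consEquiv R p i)).prod
                * g (fun i => r i (Fin.consEquiv R p i)) := by
            rw [Equiv.sum_comp (Fin.consEquiv R)
              (fun ρs => ((List.finRange (k + 1)).map fun i => W i (ρs i)).prod
                * g (fun i => r i (ρs i)))]
      _ = ∑ ρ0 : R 0, W 0 ρ0 * (∑ ρrest : (∀ i : Fin k, R i.succ),
              ((List.finRange k).map fun i => W i.succ (ρrest i)).prod
                * g (Fin.cons (r 0 ρ0) fun i => r i.succ (ρrest i))) := by
            rw [Fintype.sum_prod_type]
            refine Finset.sum_congr rfl fun ρ0 _ => ?_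
            rw [my_mul_sum hld]
            exact Finset.sum_congr rfl fun ρrest _ => hsummandW ρ0 ρrest
      _ = ∑ q0 : Q, H 0 q0 * (∑ ρrest : (∀ i : Fin k, R i.succ),
              ((List.finRange k).map fun i => W i.succ (ρrest i)).prod
                * g (Fin.cons q0 fun i => r i.succ (ρrest i))) :=
            IH 0 (fun q0 => ∑ ρrest : (∀ i : Fin k, R i.succ),
              ((List.finRange k).map fun i => W i.succ (ρrest i)).prod
                * g (Fin.cons q0 fun i => r i.succ (ρrest i)))
      _ = ∑ q0 : Q, H 0 q0 * (∑ qs' : Fin k → Q,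
              ((List.finRange k).map fun i => H i.succ (qs' i)).prod
                * g (Fin.cons q0 qs')) := by
            refine Finset.sum_congr rfl fun q0 _ => ?_
            congr 1
            exact ihk (fun i => R i.succ) (fun i => W i.succ) (fun i => r i.succ)
              (fun i => H i.succ) (fun i f => IH i.succ f) (fun qs => g (Fin.cons q0 qs))
      _ = ∑ p : Q × (Fin k → Q),
              ((List.finRange (k + 1)).map fun i => H i ((Fin.cons p.1 p.2 : Fin (k+1) → Q) i)).prod
                * g (Fin.cons p.1 p.2) := by
            rw [Fintype.sum_prod_type]
            refine Finset.sum_congr rfl fun q0 _ => ?_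
            rw [my_mul_sum hld]
            exact Finset.sum_congr rfl fun qs' _ => (hsummandH q0 qs').symm
      _ = ∑ qs : Fin (k + 1) → Q,
              ((List.finRange (k + 1)).map fun i => H i (qs i)).prod * g qs := by
            rw [← Equiv.sum_comp (Fin.consEquiv fun _ : Fin (k + 1) => Q)
              (fun qs : Fin (k + 1) → Q =>
                ((List.finRange (k + 1)).map fun i => H i (qs i)).prod * g qs)]
            rfl

/-! ### Positions and runs -/

lemma mem_pos_nil (t : RTree S) : ([] : List ℕ) ∈ t.pos := by
  cases t with | node σ ts => simp [RTree.pos]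

lemma mem_pos_cons {σ : S.symb} {ts : Fin (S.rk σ) → RTree S} (i : Fin (S.rk σ)) (w : List ℕ) :
    ((i : ℕ) :: w) ∈ (RTree.node σ ts).pos ↔ w ∈ (ts i).pos := by
  simp only [RTree.pos, Finset.mem_insert, Finset.mem_biUnion, Finset.mem_univ, true_and,
    Finset.mem_image, List.cons.injEq, reduceCtorEq, false_or]
  constructor
  · rintro ⟨j, v, hv, hji, hvw⟩
    have : j = i := Fin.val_injective hji
    subst this; subst hvw; exact hv
  · intro h
    exact ⟨i, w, h, rfl, rfl⟩

lemma mem_pos_cons' {σ : S.symb} {ts : Fin (S.rk σ) → RTree S} {j : ℕ} {w : List ℕ}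
    (h : (j :: w) ∈ (RTree.node σ ts).pos) :
    ∃ hj : j < S.rk σ, w ∈ (ts ⟨j, hj⟩).pos := by
  simp only [RTree.pos, Finset.mem_insert, Finset.mem_biUnion, Finset.mem_univ, true_and,
    Finset.mem_image, List.cons.injEq, reduceCtorEq, false_or] at h
  obtain ⟨i, v, hv, hji, hvw⟩ := h
  subst hvw
  subst hji
  exact ⟨i.isLt, hv⟩

/-- Decomposition of runs on `σ(t_1,…,t_k)` into the root state and runs on the `t_i`. -/
def runEquiv (M : WTA S B) (σ : S.symb) (ts : Fin (S.rk σ) → RTree S) :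
    (↑(RTree.node σ ts).pos → M.Q) ≃ (M.Q × ∀ i, (↑((ts i).pos) → M.Q)) where
  toFun ρ := (ρ ⟨[], mem_pos_nil _⟩,
    fun i p => ρ ⟨(i : ℕ) :: p.1, (mem_pos_cons i p.1).2 p.2⟩)
  invFun p x :=
    match x with
    | ⟨[], _⟩ => p.1
    | ⟨j :: w, _⟩ =>
        if hj : j < S.rk σ then
          if hw : w ∈ (ts ⟨j, hj⟩).pos then p.2 ⟨j, hj⟩ ⟨w, hw⟩ else p.1
        else p.1
  left_inv ρ := by
    funext x
    obtain ⟨w, hw⟩ := x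
    match w with
    | [] => rfl
    | j :: w =>
      obtain ⟨hj, hw'⟩ := mem_pos_cons' hw
      simp only [dif_pos hj, dif_pos hw']
  right_inv p := by
    obtain ⟨q, ρs⟩ := p
    refine Prod.ext rfl ?_
    funext i x
    obtain ⟨w, hw⟩ := x
    show (if hj : (i : ℕ) < S.rk σ then
        if hw' : w ∈ (ts ⟨(i : ℕ), hj⟩).pos then ρs ⟨(i : ℕ), hj⟩ ⟨w, hw'⟩ else q
      else q) = ρs i ⟨w, hw⟩
    rw [dif_pos i.isLt, dif_pos (by exact hw)]

lemma extend_symm_nil (M : WTA S B) (σ : S.symb) (ts : Fin (S.rk σ) → RTree S)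
    (p : M.Q × ∀ i, (↑((ts i).pos) → M.Q)) :
    M.extend (RTree.node σ ts) ((runEquiv M σ ts).symm p) [] = p.1 := by
  show (if h : ([] : List ℕ) ∈ (RTree.node σ ts).pos then _ else _) = _
  rw [dif_pos (mem_pos_nil _)]
  rfl

lemma extend_symm_cons (M : WTA S B) (σ : S.symb) (ts : Fin (S.rk σ) → RTree S)
    (p : M.Q × ∀ i, (↑((ts i).pos) → M.Q)) (i : Fin (S.rk σ)) (w : List ℕ) :
    M.extend (RTree.node σ ts) ((runEquiv M σ ts).symm p) ((i : ℕ) :: w)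
      = M.extend (ts i) (p.2 i) w := by
  by_cases hw : w ∈ (ts i).pos
  · show (if h : ((i : ℕ) :: w) ∈ (RTree.node σ ts).pos then _ else _) = _
    rw [dif_pos ((mem_pos_cons i w).2 hw)]
    show (if hj : (i : ℕ) < S.rk σ then
        if hw' : w ∈ (ts ⟨(i : ℕ), hj⟩).pos then p.2 ⟨(i : ℕ), hj⟩ ⟨w, hw'⟩ else p.1
      else p.1) = _
    rw [dif_pos i.isLt, dif_pos (by exact hw)]
    show p.2 i ⟨w, hw⟩ = _
    unfold WTA.extend
    rw [dif_pos hw]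
  · unfold WTA.extend
    rw [dif_neg (by rw [mem_pos_cons i w]; exact hw), dif_neg hw]

/-- For a semiring, the run semantics agrees with the initial algebra semantics. -/
lemma run_eq_init (hld : SBLeftDistributive B) (hrd : SBRightDistributive B)
    (M : WTA S B) (t : RTree S) (f : M.Q → B) :
    (∑ ρ : (↑(t.pos) → M.Q), M.wt t (M.extend t ρ) * f (M.extend t ρ []))
      = ∑ q, M.h t q * f q := by
  classical
  induction t generalizing f with
  | node σ ts ih =>
    have hRHS : (∑ q, M.h (RTree.node σ ts) q * f q)
        = ∑ q, ∑ qs : Fin (S.rk σ) → M.Q,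
            ((List.finRange (S.rk σ)).map fun i => M.h (ts i) (qs i)).prod
              * (M.δ σ qs q * f q) := by
      refine Finset.sum_congr rfl fun q _ => ?_
      rw [show M.h (RTree.node σ ts) q
          = ∑ qs : Fin (S.rk σ) → M.Q,
            ((List.finRange (S.rk σ)).map fun i => M.h (ts i) (qs i)).prod * M.δ σ qs q
          from rfl]
      rw [my_sum_mul hrd]
      exact Finset.sum_congr rfl fun qs _ => mul_assoc _ _ _
    rw [hRHS]
    have hLHS : (∑ ρ : (↑((RTree.node σ ts).pos) → M.Q),
          M.wt (RTree.node σ ts) (M.extend (RTree.node σ ts) ρ)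
            * f (M.extend (RTree.node σ ts) ρ []))
        = ∑ q : M.Q, ∑ ρs : (∀ i, (↑((ts i).pos) → M.Q)),
            ((List.finRange (S.rk σ)).map fun i => M.wt (ts i) (M.extend (ts i) (ρs i))).prod
              * (M.δ σ (fun i => M.extend (ts i) (ρs i) []) q * f q) := by
      rw [← Equiv.sum_comp (runEquiv M σ ts).symm
        (fun ρ => M.wt (RTree.node σ ts) (M.extend (RTree.node σ ts) ρ)
          * f (M.extend (RTree.node σ ts) ρ []))]
      rw [Fintype.sum_prod_type]
      refine Finset.sum_congr rfl fun q _ => Finset.sum_congr rfl fun ρs _ => ?_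
      have hnil := extend_symm_nil M σ ts (q, ρs)
      have hcons : ∀ (i : Fin (S.rk σ)),
          (fun w => M.extend (RTree.node σ ts) ((runEquiv M σ ts).symm (q, ρs)) ((i : ℕ) :: w))
            = M.extend (ts i) (ρs i) := by
        intro i; funext w; exact extend_symm_cons M σ ts (q, ρs) i w
      rw [show M.wt (RTree.node σ ts) (M.extend (RTree.node σ ts) ((runEquiv M σ ts).symm (q, ρs)))
          = ((List.finRange (S.rk σ)).map
              (fun i => M.wt (ts i)
                (fun w => M.extend (RTree.node σ ts) ((runEquiv M σ ts).symm (q, ρs))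
                  ((i : ℕ) :: w)))).prod
            * M.δ σ
              (fun i => M.extend (RTree.node σ ts) ((runEquiv M σ ts).symm (q, ρs)) [(i : ℕ)])
              (M.extend (RTree.node σ ts) ((runEquiv M σ ts).symm (q, ρs)) [])
          from rfl]
      have hmid : (fun i : Fin (S.rk σ) =>
            M.extend (RTree.node σ ts) ((runEquiv M σ ts).symm (q, ρs)) [(i : ℕ)])
          = fun i => M.extend (ts i) (ρs i) [] := by
        funext i; exact extend_symm_cons M σ ts (q, ρs) i []
      rw [hnil, hmid, mul_assoc]
      congr 2
      refine List.map_congr_left fun i _ => ?_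
      rw [hcons i]
    rw [hLHS]
    refine Finset.sum_congr rfl fun q _ => ?_
    exact core_exchange hld hrd (fun i => (↑((ts i).pos) → M.Q))
      (fun i ρ' => M.wt (ts i) (M.extend (ts i) ρ'))
      (fun i ρ' => M.extend (ts i) ρ' [])
      (fun i => M.h (ts i))
      (fun i f' => ih i f')
      (fun qs => M.δ σ qs q * f q)

/-! ### The automaton construction -/

/-- The state set: four special states `V,E,X,Y` and chain states `S k`. -/
abbrev QA (n : ℕ) : Type := Fin 4 ⊕ Fin (n + 5)

def stV {n : ℕ} : QA n := Sum.inl 0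
def stE {n : ℕ} : QA n := Sum.inl 1
def stX {n : ℕ} : QA n := Sum.inl 2
def stY {n : ℕ} : QA n := Sum.inl 3
def stS {n : ℕ} (k : Fin (n + 5)) : QA n := Sum.inr k

/-- Indicator vector of a state. -/
def indQ {n : ℕ} (s q : QA n) : B := if q = s then 1 else 0

/-- The constant attached to the chain state `S j`. -/
def valA {n : ℕ} (a : Fin n → B) (j : Fin (n + 5)) : B :=
  if (j : ℕ) = 3 then 1 else if h : 5 ≤ (j : ℕ) then a ⟨(j : ℕ) - 5, by omega⟩ else 0

/-- Transition weights for the binary symbol. -/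
def DA {n : ℕ} (a : Fin n → B) (q1 q2 q : QA n) : B :=
  match q1, q2 with
  | Sum.inl i, Sum.inl i' =>
      if i = 0 ∧ i' = 0 then indQ stX q
      else if (i = 0 ∧ i' = 1) ∨ (i = 1 ∧ i' = 0) then indQ stY q
      else if i = 1 ∧ i' = 1 then indQ stE q
      else 0
  | Sum.inl i, Sum.inr j =>
      if i = 2 ∧ (j : ℕ) = 1 then indQ stV q
      else if i = 3 ∧ (j : ℕ) = 2 then indQ stV q
      else if i = 1 ∧ ((j : ℕ) = 1 ∨ (j : ℕ) = 2) then indQ stE q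
      else 0
  | Sum.inr _, Sum.inl _ => 0
  | Sum.inr j, Sum.inr j' =>
      if j = j' then (if h : (j : ℕ) + 1 < n + 5 then indQ (stS ⟨(j : ℕ) + 1, h⟩) q else 0)
      else if (j' : ℕ) = 0 ∧ 3 ≤ (j : ℕ) then (if q = stV then valA a j else indQ stE q)
      else 0

/-- The weighted tree automaton realizing all of `B`. -/
def MA (S : RankedAlphabet) {n : ℕ} (a : Fin n → B) : WTA S B where
  Q := QA n
  fintypeQ := inferInstance
  nonemptyQ := ⟨Sum.inl 0⟩
  δ := fun σ qs q =>
    if h2 : S.rk σ = 2 then DA a (qs ⟨0, by omega⟩) (qs ⟨1, by omega⟩) q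
    else if h0 : S.rk σ = 0 then indQ (stS ⟨0, by omega⟩) q
    else 0
  F := fun q => indQ stV q

/-! ### Trees -/

def nilT {α : S.symb} (hα : S.rk α = 0) : RTree S :=
  RTree.node α (fun i => absurd i.isLt (by omega))

def pairT {σ2 : S.symb} (hσ2 : S.rk σ2 = 2) (t1 t2 : RTree S) : RTree S :=
  RTree.node σ2 (fun i => if (i : ℕ) = 0 then t1 else t2)

def UT {σ2 : S.symb} (hσ2 : S.rk σ2 = 2) {α : S.symb} (hα : S.rk α = 0) : ℕ → RTree S
  | 0 => nilT hα
  | k + 1 => pairT hσ2 (UT hσ2 hα k) (UT hσ2 hα k)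

/-! ### Computing `h` on these trees -/

lemma h_node (M : WTA S B) (σ : S.symb) (ts : Fin (S.rk σ) → RTree S) (q : M.Q) :
    M.h (RTree.node σ ts) q
      = ∑ qs : Fin (S.rk σ) → M.Q,
          ((List.finRange (S.rk σ)).map (fun i => M.h (ts i) (qs i))).prod * M.δ σ qs q := by
  rw [WTA.h]

lemma MA_δ0 {n : ℕ} (a : Fin n → B) {α : S.symb} (hα : S.rk α = 0)
    (qs : Fin (S.rk α) → QA n) (q : QA n) :
    (MA S a).δ α qs q = indQ (stS ⟨0, by omega⟩) q := by
  simp only [MA]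
  rw [dif_neg (by omega), dif_pos hα]

lemma MA_δ2 {n : ℕ} (a : Fin n → B) {σ2 : S.symb} (hσ2 : S.rk σ2 = 2)
    (qs : Fin (S.rk σ2) → QA n) (q : QA n) :
    (MA S a).δ σ2 qs q
      = DA a (qs ⟨0, by omega⟩) (qs ⟨1, by omega⟩) q := by
  simp only [MA]
  rw [dif_pos hσ2]

lemma sum_pi2 {Q : Type} [Fintype Q] {k : ℕ} (hk : k = 2) (g : (Fin k → Q) → B) :
    (∑ qs : Fin k → Q, g qs)
      = ∑ p : Q × Q, g (fun i => if (i : ℕ) = 0 then p.1 else p.2) := by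
  subst hk
  rw [← Equiv.sum_comp (finTwoArrowEquiv Q).symm g]
  refine Finset.sum_congr rfl fun p _ => ?_
  congr 1
  funext i
  fin_cases i <;> simp [finTwoArrowEquiv]

lemma prod2 {k : ℕ} (hk : k = 2) (f : Fin k → B) :
    ((List.finRange k).map f).prod = f ⟨0, by omega⟩ * f ⟨1, by omega⟩ := by
  subst hk
  show f 0 * (f 1 * 1) = _
  rw [mul_one]
  rfl

lemma h_nil {n : ℕ} (a : Fin n → B) {α : S.symb} (hα : S.rk α = 0) (q : QA n) :
    (MA S a).h (nilT hα) q = indQ (stS ⟨0, by omega⟩) q := by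
  haveI : IsEmpty (Fin (S.rk α)) := by rw [hα]; infer_instance
  unfold nilT
  refine (h_node (MA S a) _ _ q).trans ?_
  rw [Fintype.sum_unique]
  have hnilr : (List.finRange (S.rk α)) = [] :=
    List.length_eq_zero_iff.mp (by rw [List.length_finRange]; exact hα)
  rw [hnilr]
  simp only [List.map_nil, List.prod_nil, one_mul]
  exact MA_δ0 a hα _ q

lemma h_pair {n : ℕ} (a : Fin n → B) {σ2 : S.symb} (hσ2 : S.rk σ2 = 2)
    (t1 t2 : RTree S) (q : QA n) :
    (MA S a).h (pairT hσ2 t1 t2) q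
      = ∑ p : QA n × QA n, (MA S a).h t1 p.1 * (MA S a).h t2 p.2 * DA a p.1 p.2 q := by
  unfold pairT
  refine (h_node (MA S a) _ _ q).trans ?_
  rw [sum_pi2 hσ2]
  refine Finset.sum_congr rfl fun p _ => ?_
  rw [prod2 hσ2]
  exact congrArg₂ (· * ·) rfl (MA_δ2 a hσ2 _ q)

/-- indicator collapse for a double sum -/
lemma sum_ind2 {n : ℕ} (x y : B) (s s' : QA n) (c : QA n → QA n → B) :
    (∑ p : QA n × QA n,
        (if p.1 = s then x else 0) * (if p.2 = s' then y else 0) * c p.1 p.2)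
      = x * y * c s s' := by
  classical
  rw [Finset.sum_eq_single (s, s') (fun p _ hne => by
      by_cases h1 : p.1 = s
      · have h2 : p.2 ≠ s' := fun h2 => hne (Prod.ext h1 h2)
        rw [if_neg h2, mul_zero, zero_mul]
      · rw [if_neg h1, zero_mul, zero_mul])
    (fun habs => absurd (Finset.mem_univ (s, s')) habs)]
  simp

/-- indicator collapse for a single sum -/
lemma sum_ind1 {n : ℕ} (x : B) (s : QA n) (c : QA n → B) :
    (∑ q1 : QA n, (if q1 = s then x else 0) * c q1) = x * c s := by
  classical
  rw [Finset.sum_eq_single s (fun q1 _ hne => by rw [if_neg hne, zero_mul])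
    (fun habs => absurd (Finset.mem_univ s) habs)]
  rw [if_pos rfl]

/-- collapse of the right (marker) component -/
lemma collapse_right {n : ℕ} (s' : QA n) (c1 : QA n → B) (c : QA n → QA n → B) :
    (∑ p : QA n × QA n, c1 p.1 * indQ s' p.2 * c p.1 p.2)
      = ∑ q1 : QA n, c1 q1 * c q1 s' := by
  classical
  rw [Fintype.sum_prod_type]
  refine Finset.sum_congr rfl fun q1 _ => ?_
  rw [Finset.sum_eq_single s' (fun q2 _ hne => by
      show c1 q1 * indQ s' q2 * c q1 q2 = 0
      rw [show indQ s' q2 = (if q2 = s' then (1:B) else 0) from rfl, if_neg hne, mul_zero,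
        zero_mul])
    (fun habs => absurd (Finset.mem_univ s') habs)]
  show c1 q1 * indQ s' s' * c q1 s' = _
  rw [show indQ s' s' = (if s' = s' then (1:B) else 0) from rfl, if_pos rfl, mul_one]

lemma mul_indQ {n : ℕ} (x : B) (s q : QA n) :
    x * indQ s q = if q = s then x else 0 := by
  unfold indQ; split <;> simp

lemma DA_SS {n : ℕ} (a : Fin n → B) (j j' : Fin (n + 5)) (q : QA n) :
    DA a (stS j) (stS j') q
      = if j = j' then (if h : (j : ℕ) + 1 < n + 5 then indQ (stS ⟨(j : ℕ) + 1, h⟩) q else 0)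
        else if (j' : ℕ) = 0 ∧ 3 ≤ (j : ℕ) then (if q = stV then valA a j else indQ stE q)
        else 0 := rfl

/-- a "good" tree: its `h`-vector is `b` at `V`, `1` at `E`, and `0` elsewhere. -/
def GoodT {n : ℕ} (a : Fin n → B) (b : B) (t : RTree S) : Prop :=
  ∀ q : QA n, (MA S a).h t q = (if q = stV then b else 0) + (if q = stE then (1:B) else 0)

lemma pure_U {n : ℕ} (a : Fin n → B) {σ2 : S.symb} (hσ2 : S.rk σ2 = 2)
    {α : S.symb} (hα : S.rk α = 0) :
    ∀ (k : ℕ) (hk : k < n + 5) (q : QA n),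
      (MA S a).h (UT hσ2 hα k) q = indQ (stS ⟨k, hk⟩) q := by
  intro k
  induction k with
  | zero => intro hk q; exact h_nil a hα q
  | succ k ihk =>
    intro hk q
    rw [show UT hσ2 hα (k + 1) = pairT hσ2 (UT hσ2 hα k) (UT hσ2 hα k) from rfl]
    rw [h_pair a hσ2]
    have hk' : k < n + 5 := by omega
    calc (∑ p : QA n × QA n,
            (MA S a).h (UT hσ2 hα k) p.1 * (MA S a).h (UT hσ2 hα k) p.2 * DA a p.1 p.2 q)
        = ∑ p : QA n × QA n,
            (if p.1 = stS ⟨k, hk'⟩ then (1:B) else 0)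
              * (if p.2 = stS ⟨k, hk'⟩ then (1:B) else 0) * DA a p.1 p.2 q := by
          refine Finset.sum_congr rfl fun p _ => ?_
          rw [ihk hk' p.1, ihk hk' p.2]
          rfl
      _ = 1 * 1 * DA a (stS ⟨k, hk'⟩) (stS ⟨k, hk'⟩) q :=
          sum_ind2 1 1 (stS ⟨k, hk'⟩) (stS ⟨k, hk'⟩) (fun q1 q2 => DA a q1 q2 q)
      _ = indQ (stS ⟨k + 1, hk⟩) q := by
          rw [one_mul, one_mul, DA_SS, if_pos rfl,
            dif_pos (show ((⟨k, hk'⟩ : Fin (n + 5)) : ℕ) + 1 < n + 5 from hk)]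

lemma good_const {n : ℕ} (a : Fin n → B) {σ2 : S.symb} (hσ2 : S.rk σ2 = 2)
    {α : S.symb} (hα : S.rk α = 0) (k : ℕ) (h3 : 3 ≤ k) (hk : k < n + 5) :
    GoodT a (valA a ⟨k, hk⟩) (pairT hσ2 (UT hσ2 hα k) (UT hσ2 hα 0)) := by
  intro q
  rw [h_pair a hσ2]
  have h0 : (0 : ℕ) < n + 5 := by omega
  calc (∑ p : QA n × QA n,
          (MA S a).h (UT hσ2 hα k) p.1 * (MA S a).h (UT hσ2 hα 0) p.2 * DA a p.1 p.2 q)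
      = ∑ p : QA n × QA n,
          (if p.1 = stS ⟨k, hk⟩ then (1:B) else 0)
            * (if p.2 = stS ⟨0, h0⟩ then (1:B) else 0) * DA a p.1 p.2 q := by
        refine Finset.sum_congr rfl fun p _ => ?_
        rw [pure_U a hσ2 hα k hk p.1, pure_U a hσ2 hα 0 h0 p.2]
        rfl
    _ = 1 * 1 * DA a (stS ⟨k, hk⟩) (stS ⟨0, h0⟩) q :=
        sum_ind2 1 1 (stS ⟨k, hk⟩) (stS ⟨0, h0⟩) (fun q1 q2 => DA a q1 q2 q)
    _ = (if q = stV then valA a ⟨k, hk⟩ else 0) + (if q = stE then (1:B) else 0) := by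
        rw [one_mul, one_mul, DA_SS,
          if_neg (show ¬(⟨k, hk⟩ : Fin (n + 5)) = ⟨0, h0⟩ by
            simp only [Fin.mk.injEq]; omega),
          if_pos (show ((⟨0, h0⟩ : Fin (n + 5)) : ℕ) = 0 ∧ 3 ≤ ((⟨k, hk⟩ : Fin (n + 5)) : ℕ)
            from ⟨rfl, h3⟩)]
        by_cases hV : q = stV
        · rw [if_pos hV, if_pos hV, if_neg (by rw [hV]; simp [stV, stE]), add_zero]
        · rw [if_neg hV, if_neg hV, zero_add]
          rfl

/-- `h` of the intermediate pair node of two good trees. -/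
lemma h_mid {n : ℕ} (a : Fin n → B) {σ2 : S.symb} (hσ2 : S.rk σ2 = 2)
    (hld : SBLeftDistributive B) (hrd : SBRightDistributive B)
    {b b' : B} {t t' : RTree S} (hb : GoodT a b t) (hb' : GoodT a b' t') (q : QA n) :
    (MA S a).h (pairT hσ2 t t') q
      = (if q = stX then b * b' else 0)
        + ((if q = stY then b + b' else 0) + (if q = stE then (1:B) else 0)) := by
  rw [h_pair a hσ2]
  calc (∑ p : QA n × QA n, (MA S a).h t p.1 * (MA S a).h t' p.2 * DA a p.1 p.2 q)
      = ∑ p : QA n × QA n,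
          (((if p.1 = stV then b else 0) * (if p.2 = stV then b' else 0) * DA a p.1 p.2 q
            + (if p.1 = stV then b else 0) * (if p.2 = stE then (1:B) else 0) * DA a p.1 p.2 q)
          + ((if p.1 = stE then (1:B) else 0) * (if p.2 = stV then b' else 0) * DA a p.1 p.2 q
            + (if p.1 = stE then (1:B) else 0) * (if p.2 = stE then (1:B) else 0)
              * DA a p.1 p.2 q)) := by
        refine Finset.sum_congr rfl fun p _ => ?_
        rw [hb p.1, hb' p.2]
        rw [hrd, hld, hld, hrd, hrd, hrd]
    _ = (b * b' * DA a stV stV q + b * 1 * DA a stV stE q)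
          + (1 * b' * DA a stE stV q + 1 * 1 * DA a stE stE q) := by
        rw [Finset.sum_add_distrib, Finset.sum_add_distrib, Finset.sum_add_distrib]
        rw [sum_ind2 b b' stV stV (fun q1 q2 => DA a q1 q2 q),
          sum_ind2 b 1 stV stE (fun q1 q2 => DA a q1 q2 q),
          sum_ind2 1 b' stE stV (fun q1 q2 => DA a q1 q2 q),
          sum_ind2 1 1 stE stE (fun q1 q2 => DA a q1 q2 q)]
    _ = (if q = stX then b * b' else 0)
          + ((if q = stY then b + b' else 0) + (if q = stE then (1:B) else 0)) := by
        simp only [mul_one, one_mul]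
        rw [show DA a stV stV q = indQ stX q from rfl]
        rw [show DA a stV stE q = indQ stY q from rfl]
        rw [show DA a stE stV q = indQ stY q from rfl]
        rw [show DA a stE stE q = indQ stE q from rfl]
        rw [mul_indQ, mul_indQ, mul_indQ]
        rw [add_assoc]
        congr 1
        rw [← add_assoc]
        congr 1
        by_cases hY : q = stY
        · rw [if_pos hY, if_pos hY, if_pos hY]
        · rw [if_neg hY, if_neg hY, if_neg hY, add_zero]

lemma good_times {n : ℕ} (a : Fin n → B) {σ2 : S.symb} (hσ2 : S.rk σ2 = 2)
    {α : S.symb} (hα : S.rk α = 0)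
    (hld : SBLeftDistributive B) (hrd : SBRightDistributive B)
    {b b' : B} {t t' : RTree S} (hb : GoodT a b t) (hb' : GoodT a b' t') :
    GoodT a (b * b') (pairT hσ2 (pairT hσ2 t t') (UT hσ2 hα 1)) := by
  intro q
  rw [h_pair a hσ2]
  have h1 : (1 : ℕ) < n + 5 := by omega
  calc (∑ p : QA n × QA n,
          (MA S a).h (pairT hσ2 t t') p.1 * (MA S a).h (UT hσ2 hα 1) p.2 * DA a p.1 p.2 q)
      = ∑ p : QA n × QA n,
          (MA S a).h (pairT hσ2 t t') p.1 * indQ (stS ⟨1, h1⟩) p.2 * DA a p.1 p.2 q := by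
        refine Finset.sum_congr rfl fun p _ => ?_
        rw [pure_U a hσ2 hα 1 h1 p.2]
    _ = ∑ q1 : QA n, (MA S a).h (pairT hσ2 t t') q1 * DA a q1 (stS ⟨1, h1⟩) q :=
        collapse_right (stS ⟨1, h1⟩) (fun q1 => (MA S a).h (pairT hσ2 t t') q1)
          (fun q1 q2 => DA a q1 q2 q)
    _ = ∑ q1 : QA n,
          ((if q1 = stX then b * b' else 0) * DA a q1 (stS ⟨1, h1⟩) q
            + ((if q1 = stY then b + b' else 0) * DA a q1 (stS ⟨1, h1⟩) q
              + (if q1 = stE then (1:B) else 0) * DA a q1 (stS ⟨1, h1⟩) q)) := by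
        refine Finset.sum_congr rfl fun q1 _ => ?_
        rw [h_mid a hσ2 hld hrd hb hb' q1, hrd, hrd]
    _ = (b * b') * DA a stX (stS ⟨1, h1⟩) q
          + ((b + b') * DA a stY (stS ⟨1, h1⟩) q + 1 * DA a stE (stS ⟨1, h1⟩) q) := by
        rw [Finset.sum_add_distrib, Finset.sum_add_distrib, sum_ind1, sum_ind1, sum_ind1]
    _ = (if q = stV then b * b' else 0) + (if q = stE then (1:B) else 0) := by
        rw [show DA a stX (stS ⟨1, h1⟩) q = indQ stV q from rfl]
        rw [show DA a stY (stS ⟨1, h1⟩) q = (0 : B) from rfl]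
        rw [show DA a stE (stS ⟨1, h1⟩) q = indQ stE q from rfl]
        simp only [mul_zero, zero_add, one_mul]
        rw [mul_indQ]
        rfl

lemma good_plus {n : ℕ} (a : Fin n → B) {σ2 : S.symb} (hσ2 : S.rk σ2 = 2)
    {α : S.symb} (hα : S.rk α = 0)
    (hld : SBLeftDistributive B) (hrd : SBRightDistributive B)
    {b b' : B} {t t' : RTree S} (hb : GoodT a b t) (hb' : GoodT a b' t') :
    GoodT a (b + b') (pairT hσ2 (pairT hσ2 t t') (UT hσ2 hα 2)) := by
  intro q
  rw [h_pair a hσ2]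
  have h2 : (2 : ℕ) < n + 5 := by omega
  calc (∑ p : QA n × QA n,
          (MA S a).h (pairT hσ2 t t') p.1 * (MA S a).h (UT hσ2 hα 2) p.2 * DA a p.1 p.2 q)
      = ∑ p : QA n × QA n,
          (MA S a).h (pairT hσ2 t t') p.1 * indQ (stS ⟨2, h2⟩) p.2 * DA a p.1 p.2 q := by
        refine Finset.sum_congr rfl fun p _ => ?_
        rw [pure_U a hσ2 hα 2 h2 p.2]
    _ = ∑ q1 : QA n, (MA S a).h (pairT hσ2 t t') q1 * DA a q1 (stS ⟨2, h2⟩) q :=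
        collapse_right (stS ⟨2, h2⟩) (fun q1 => (MA S a).h (pairT hσ2 t t') q1)
          (fun q1 q2 => DA a q1 q2 q)
    _ = ∑ q1 : QA n,
          ((if q1 = stX then b * b' else 0) * DA a q1 (stS ⟨2, h2⟩) q
            + ((if q1 = stY then b + b' else 0) * DA a q1 (stS ⟨2, h2⟩) q
              + (if q1 = stE then (1:B) else 0) * DA a q1 (stS ⟨2, h2⟩) q)) := by
        refine Finset.sum_congr rfl fun q1 _ => ?_
        rw [h_mid a hσ2 hld hrd hb hb' q1, hrd, hrd]
    _ = (b * b') * DA a stX (stS ⟨2, h2⟩) q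
          + ((b + b') * DA a stY (stS ⟨2, h2⟩) q + 1 * DA a stE (stS ⟨2, h2⟩) q) := by
        rw [Finset.sum_add_distrib, Finset.sum_add_distrib, sum_ind1, sum_ind1, sum_ind1]
    _ = (if q = stV then b + b' else 0) + (if q = stE then (1:B) else 0) := by
        rw [show DA a stX (stS ⟨2, h2⟩) q = (0 : B) from rfl]
        rw [show DA a stY (stS ⟨2, h2⟩) q = indQ stV q from rfl]
        rw [show DA a stE (stS ⟨2, h2⟩) q = indQ stE q from rfl]
        simp only [mul_zero, zero_add, one_mul]
        rw [mul_indQ]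
        rfl

/-- The run semantics of a good tree is its value. -/
lemma runSem_good {n : ℕ} (a : Fin n → B)
    (hld : SBLeftDistributive B) (hrd : SBRightDistributive B)
    {b : B} {t : RTree S} (hb : GoodT a b t) :
    (MA S a).runSem t = b := by
  classical
  rw [show (MA S a).runSem t
      = ∑ ρ : (↑(t.pos) → (MA S a).Q),
          (MA S a).wt t ((MA S a).extend t ρ) * (MA S a).F ((MA S a).extend t ρ []) from rfl]
  rw [run_eq_init hld hrd (MA S a) t (MA S a).F]
  show (∑ q : QA n, (MA S a).h t q * (MA S a).F q) = b
  rw [Finset.sum_eq_single stV (fun q _ hne => by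
      rw [show (MA S a).F q = (if q = stV then (1:B) else 0) from rfl, if_neg hne, mul_zero])
    (fun habs => absurd (Finset.mem_univ stV) habs)]
  rw [show (MA S a).F stV = (if stV = (stV : QA n) then (1:B) else 0) from rfl, if_pos rfl,
    mul_one]
  rw [hb stV, if_pos rfl, if_neg (by simp [stV, stE]), add_zero]

lemma valA_gen {n : ℕ} (a : Fin n → B) (i : Fin n) (h : 5 + (i : ℕ) < n + 5) :
    valA a ⟨5 + (i : ℕ), h⟩ = a i := by
  show (if 5 + (i : ℕ) = 3 then (1:B)
    else if h' : 5 ≤ 5 + (i : ℕ) then a ⟨5 + (i : ℕ) - 5, by omega⟩ else 0) = a i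
  rw [if_neg (by omega), dif_pos (by omega)]
  congr 1
  apply Fin.ext
  show 5 + (i : ℕ) - 5 = (i : ℕ)
  omega

lemma valA_three {n : ℕ} (a : Fin n → B) (h : (3:ℕ) < n + 5) : valA a ⟨3, h⟩ = 1 := rfl

lemma valA_four {n : ℕ} (a : Fin n → B) (h : (4:ℕ) < n + 5) : valA a ⟨4, h⟩ = 0 := rfl

/-- If `Σ` contains a binary symbol and `B` is a finitely generated semiring
(a strong bimonoid which is left- and right-distributive), then there is a wta over
`Σ` and `B` whose run semantics has image all of `B`. -/
theorem statement5 (S : RankedAlphabet) (hbin : ∃ σ, S.rk σ = 2)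
    (B : Type) [StrongBimonoid B]
    (hld : SBLeftDistributive B) (hrd : SBRightDistributive B)
    (hfg : ∃ A : Set B, A.Finite ∧ {b : B | SBClosure A b} = Set.univ) :
    ∃ M : WTA S B, Set.range M.runSem = Set.univ := by
  classical
  obtain ⟨σ2, hσ2⟩ := hbin
  obtain ⟨α, hα⟩ := S.exists_nullary
  obtain ⟨A, hAfin, hAcl⟩ := hfg
  set L : List B := hAfin.toFinset.toList with hL
  refine ⟨MA S L.get, ?_⟩
  rw [Set.eq_univ_iff_forall]
  intro b
  have hb : SBClosure A b := by
    have : b ∈ {b : B | SBClosure A b} := by rw [hAcl]; trivial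
    exact this
  have main : ∀ c : B, SBClosure A c → ∃ t : RTree S, GoodT L.get c t := by
    intro c hc
    induction hc with
    | @base x hx =>
      have hxL : x ∈ L := by
        rw [hL, Finset.mem_toList, Set.Finite.mem_toFinset]
        exact hx
      obtain ⟨i, hi⟩ := List.mem_iff_get.mp hxL
      have hk : 5 + (i : ℕ) < L.length + 5 := by omega
      refine ⟨pairT hσ2 (UT hσ2 hα (5 + (i : ℕ))) (UT hσ2 hα 0), ?_⟩
      have hg := good_const L.get hσ2 hα (5 + (i : ℕ)) (by omega) hk
      rwa [valA_gen L.get i hk, hi] at hg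
    | zero =>
      have h4 : (4:ℕ) < L.length + 5 := by omega
      refine ⟨pairT hσ2 (UT hσ2 hα 4) (UT hσ2 hα 0), ?_⟩
      have hg := good_const L.get hσ2 hα 4 (by omega) h4
      rwa [valA_four L.get h4] at hg
    | one =>
      have h3 : (3:ℕ) < L.length + 5 := by omega
      refine ⟨pairT hσ2 (UT hσ2 hα 3) (UT hσ2 hα 0), ?_⟩
      have hg := good_const L.get hσ2 hα 3 (by omega) h3
      rwa [valA_three L.get h3] at hg
    | add h1 h2 ih1 ih2 =>
      obtain ⟨t, ht⟩ := ih1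
      obtain ⟨t', ht'⟩ := ih2
      exact ⟨_, good_plus L.get hσ2 hα hld hrd ht ht'⟩
    | mul h1 h2 ih1 ih2 =>
      obtain ⟨t, ht⟩ := ih1
      obtain ⟨t', ht'⟩ := ih2
      exact ⟨_, good_times L.get hσ2 hα hld hrd ht ht'⟩
  obtain ⟨t, ht⟩ := main b hb
  exact ⟨t, runSem_good L.get hld hrd ht⟩
end
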